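/- arXiv:1408.3137 — 4 statements merged into one kernel-verified Lean document; each statement's English description precedes it below -/
import Mathlib

section
/- For all t ≥ 3, k ≥ 2t − 3 and n ≥ 2, sat(K_t, K_k^n) ≤ min{(2t−4)kn + (t−2)n^2 − 2(2t−4)n − C(2t−4, 2), (2t−3)kn − (2t−3)n − (2t−3)(t−1)}, where C(2t−4, 2) denotes the binomial coefficient (2t−4 choose 2); that is, there exists a K_t-saturated subgraph of K_k^n with at most that many edges. -/
open SimpleGraph

/-- The complete balanced `k`-partite graph with partite sets `V_i = {i} × Fin n`. -/
def multipartite (k n : ℕ) : SimpleGraph (Fin k × Fin n) where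
  Adj u w := u.1 ≠ w.1
  symm := ⟨fun _ _ h => h.symm⟩
  loopless := ⟨fun _ h => h rfl⟩

/-- `J` is a `K_t`-saturated subgraph of `G`. -/
def IsSatIn {V : Type*} (t : ℕ) (J G : SimpleGraph V) : Prop :=
  J ≤ G ∧ J.CliqueFree t ∧
    ∀ u w : V, G.Adj u w → ¬ J.Adj u w →
      ¬ (J ⊔ SimpleGraph.fromEdgeSet {s(u, w)}).CliqueFree t


open SimpleGraph Finset

open scoped Classical

namespace Sat14

/-- special ("dominating") vertices: part < P, second coordinate 0 -/
def Dp {k n : ℕ} (P : ℕ) (x : Fin k × Fin n) : Prop := x.1.val < P ∧ x.2.val = 0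

/-- generic construction -/
def gen (k n P : ℕ) (R Rn : ℕ → ℕ → Prop) (hR : ∀ a b, R a b → R b a)
    (hRn : ∀ a b, Rn a b → Rn b a) : SimpleGraph (Fin k × Fin n) where
  Adj u w := u.1 ≠ w.1 ∧
    ((Dp P u ∧ Dp P w ∧ R u.1.val w.1.val) ∨ (Dp P u ∧ ¬ Dp P w) ∨ (¬ Dp P u ∧ Dp P w) ∨
      (¬ Dp P u ∧ ¬ Dp P w ∧ Rn u.1.val w.1.val))
  symm := by
    constructor
    rintro u w ⟨h1, h2⟩
    refine ⟨Ne.symm h1, ?_⟩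
    rcases h2 with ⟨a, b, c⟩ | ⟨a, b⟩ | ⟨a, b⟩ | ⟨a, b, c⟩
    · exact Or.inl ⟨b, a, hR _ _ c⟩
    · exact Or.inr (Or.inr (Or.inl ⟨b, a⟩))
    · exact Or.inr (Or.inl ⟨b, a⟩)
    · exact Or.inr (Or.inr (Or.inr ⟨b, a, hRn _ _ c⟩))
  loopless := by constructor; rintro u ⟨h1, -⟩; exact h1 rfl

lemma gen_adj {k n : ℕ} (P : ℕ) (R Rn : ℕ → ℕ → Prop) (hR) (hRn) (u w : Fin k × Fin n) :
    (gen k n P R Rn hR hRn).Adj u w ↔ u.1 ≠ w.1 ∧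
    ((Dp P u ∧ Dp P w ∧ R u.1.val w.1.val) ∨ (Dp P u ∧ ¬ Dp P w) ∨ (¬ Dp P u ∧ Dp P w) ∨
      (¬ Dp P u ∧ ¬ Dp P w ∧ Rn u.1.val w.1.val)) := Iff.rfl

lemma gen_le (k n P : ℕ) (R Rn : ℕ → ℕ → Prop) (hR) (hRn) :
    gen k n P R Rn hR hRn ≤ multipartite k n := fun _ _ h => h.1

section Master
variable {s k n P : ℕ} {R Rn : ℕ → ℕ → Prop} {hR : ∀ a b, R a b → R b a}
  {hRn : ∀ a b, Rn a b → Rn b a}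

lemma master_cliqueFree
    (C1 : ∀ I : Finset ℕ, (∀ a ∈ I, a < P) → (I : Set ℕ).Pairwise R → I.card ≤ s + 1)
    (C2 : ∀ i j, Rn i j → ∀ I : Finset ℕ, (∀ a ∈ I, a < P) → (I : Set ℕ).Pairwise R →
      i ∉ I → j ∉ I → I.card ≤ s)
    (C3 : ∀ i j l, i ≠ j → i ≠ l → j ≠ l → Rn i j → Rn i l → Rn j l → False) :
    (gen k n P R Rn hR hRn).CliqueFree (s + 3) := by
  intro S hS
  obtain ⟨hclq, hcard⟩ := hS
  set G := gen k n P R Rn hR hRn with hG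
  have hadj : ∀ x ∈ S, ∀ y ∈ S, x ≠ y → G.Adj x y := by
    intro x hx y hy hxy
    exact hclq hx hy hxy
  set SD := S.filter (fun v => Dp P v) with hSD
  set SN := S.filter (fun v => ¬ Dp P v) with hSN
  have hsplit : SD.card + SN.card = S.card :=
    Finset.card_filter_add_card_filter_not _
  -- the parts of SD form an R-clique
  have hinj : Set.InjOn (fun v : Fin k × Fin n => v.1.val) SD := by
    intro x hx y hy hxy
    simp only [hSD, Finset.coe_filter, Set.mem_setOf_eq] at hx hy
    have h1 : x.1 = y.1 := Fin.val_injective hxy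
    have h2 : x.2 = y.2 := Fin.val_injective (hx.2.2.trans hy.2.2.symm)
    exact Prod.ext h1 h2
  set I : Finset ℕ := SD.image (fun v => v.1.val) with hI
  have hIcard : I.card = SD.card := Finset.card_image_of_injOn hinj
  have hIP : ∀ a ∈ I, a < P := by
    intro a ha
    simp only [hI, Finset.mem_image] at ha
    obtain ⟨v, hv, rfl⟩ := ha
    exact (Finset.mem_filter.mp hv).2.1
  have hIR : (I : Set ℕ).Pairwise R := by
    intro a ha b hb hab
    simp only [hI, Finset.coe_image, Set.mem_image, Finset.mem_coe] at ha hb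
    obtain ⟨x, hx, rfl⟩ := ha
    obtain ⟨y, hy, rfl⟩ := hb
    have hxD := (Finset.mem_filter.mp hx).2
    have hyD := (Finset.mem_filter.mp hy).2
    have hxy : x ≠ y := fun h => hab (by rw [h])
    have := hadj x (Finset.mem_filter.mp hx).1 y (Finset.mem_filter.mp hy).1 hxy
    rw [hG, gen_adj] at this
    rcases this.2 with ⟨-, -, h⟩ | ⟨-, h⟩ | ⟨h, -⟩ | ⟨h, -⟩ <;> first | exact h | exact absurd hxD h | exact absurd hyD h
  have hIavoid : ∀ x ∈ SN, x.1.val ∉ I := by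
    intro x hx hmem
    simp only [hI, Finset.mem_image] at hmem
    obtain ⟨y, hy, hxy⟩ := hmem
    have hyD := (Finset.mem_filter.mp hy).2
    have hxD := (Finset.mem_filter.mp hx).2
    have hne : y ≠ x := by
      intro h; rw [h] at hyD; exact hxD hyD
    have := hadj y (Finset.mem_filter.mp hy).1 x (Finset.mem_filter.mp hx).1 hne
    exact this.1 (Fin.val_injective hxy)
  -- SN parts are pairwise Rn
  have hRnSN : ∀ x ∈ SN, ∀ y ∈ SN, x ≠ y → Rn x.1.val y.1.val ∧ x.1.val ≠ y.1.val := by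
    intro x hx y hy hxy
    have hxD := (Finset.mem_filter.mp hx).2
    have hyD := (Finset.mem_filter.mp hy).2
    have := hadj x (Finset.mem_filter.mp hx).1 y (Finset.mem_filter.mp hy).1 hxy
    rw [hG, gen_adj] at this
    refine ⟨?_, fun h => this.1 (Fin.val_injective h)⟩
    rcases this.2 with ⟨h, -⟩ | ⟨h, -⟩ | ⟨-, h⟩ | ⟨-, -, h⟩ <;>
      first | exact h | exact absurd h hxD | exact absurd h hyD
  have hSN2 : SN.card ≤ 2 := by
    by_contra h
    push_neg at h
    obtain ⟨x, hx, y, hy, z, hz, hxy, hxz, hyz⟩ := Finset.two_lt_card.mp h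
    obtain ⟨h1, h1'⟩ := hRnSN x hx y hy hxy
    obtain ⟨h2, h2'⟩ := hRnSN x hx z hz hxz
    obtain ⟨h3, h3'⟩ := hRnSN y hy z hz hyz
    exact C3 _ _ _ h1' h2' h3' h1 h2 h3
  rcases Nat.lt_or_ge SN.card 2 with h2 | h2
  · have := C1 I hIP hIR
    omega
  · have h2 : SN.card = 2 := le_antisymm hSN2 h2
    obtain ⟨x, y, hxy, hxySN⟩ := Finset.card_eq_two.mp h2
    have hx : x ∈ SN := by rw [hxySN]; simp
    have hy : y ∈ SN := by rw [hxySN]; simp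
    obtain ⟨hRnxy, -⟩ := hRnSN x hx y hy hxy
    have := C2 _ _ hRnxy I hIP hIR (hIavoid x hx) (hIavoid y hy)
    omega

end Master


section MasterSat
variable {s k n P : ℕ} {R Rn : ℕ → ℕ → Prop} {hR : ∀ a b, R a b → R b a}
  {hRn : ∀ a b, Rn a b → Rn b a}

/-- helper: the set of D-vertices with parts in `I`. -/
noncomputable def DI {k n : ℕ} (I : Finset ℕ) (hIk : ∀ c ∈ I, c < k) (hn : 0 < n) :
    Finset (Fin k × Fin n) :=
  (I.attachFin hIk).image (fun i => (i, (⟨0, hn⟩ : Fin n)))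

lemma mem_DI {k n : ℕ} {I : Finset ℕ} {hIk : ∀ c ∈ I, c < k} {hn : 0 < n}
    {x : Fin k × Fin n} : x ∈ DI I hIk hn ↔ x.1.val ∈ I ∧ x.2 = (⟨0, hn⟩ : Fin n) := by
  simp only [DI, Finset.mem_image]
  constructor
  · rintro ⟨i, hi, rfl⟩
    exact ⟨(Finset.mem_attachFin _).mp hi, rfl⟩
  · rintro ⟨h1, h2⟩
    exact ⟨x.1, (Finset.mem_attachFin _).mpr h1, by rw [← h2]⟩

lemma card_DI {k n : ℕ} (I : Finset ℕ) (hIk : ∀ c ∈ I, c < k) (hn : 0 < n) :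
    (DI I hIk hn).card = I.card := by
  rw [DI, Finset.card_image_of_injective _ (fun a b h => by
    simpa [Prod.ext_iff, Fin.val_injective.eq_iff] using (Prod.ext_iff.mp h).1), Finset.card_attachFin]

set_option maxHeartbeats 1000000 in
lemma master_sat (hkP : P ≤ k) (hk3 : 2 * s + 3 ≤ k) (hn : 2 ≤ n)
    (S1 : ∀ a b, a < P → b < P → a ≠ b → ¬ R a b → ∃ I : Finset ℕ, I.card = s ∧
      (∀ c ∈ I, c < P) ∧ (I : Set ℕ).Pairwise R ∧ a ∉ I ∧ b ∉ I ∧ ∀ c ∈ I, R a c ∧ R b c)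
    (S2 : ∀ i j, i ≠ j → ¬ Rn i j → ∃ I : Finset ℕ, I.card = s + 1 ∧
      (∀ c ∈ I, c < P) ∧ (I : Set ℕ).Pairwise R ∧ i ∉ I ∧ j ∉ I) :
    ∀ u w, (multipartite k n).Adj u w → ¬ (gen k n P R Rn hR hRn).Adj u w →
      ¬ ((gen k n P R Rn hR hRn) ⊔ fromEdgeSet {s(u, w)}).CliqueFree (s + 3) := by
  intro u w huw hnadj hCF
  have hn0 : 0 < n := by omega
  have hne1 : u.1 ≠ w.1 := huw
  have hneuw : u ≠ w := fun h => hne1 (by rw [h])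
  set G := gen k n P R Rn hR hRn with hGdef
  set G' := G ⊔ fromEdgeSet {s(u, w)} with hG'
  have hG'uw : G'.Adj u w := by
    rw [hG', SimpleGraph.sup_adj, SimpleGraph.fromEdgeSet_adj]
    exact Or.inr ⟨rfl, hneuw⟩
  have hGle : ∀ {x y}, G.Adj x y → G'.Adj x y := fun h => Or.inl h
  have hsymm : Symmetric G'.Adj := fun x y h => h.symm
  -- adjacency helpers
  have adj_DD : ∀ x y : Fin k × Fin n, Dp P x → Dp P y → x.1.val ≠ y.1.val →
      R x.1.val y.1.val → G.Adj x y := by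
    intro x y hx hy h1 h2
    exact ⟨fun h => h1 (by rw [h]), Or.inl ⟨hx, hy, h2⟩⟩
  have adj_DN : ∀ x y : Fin k × Fin n, Dp P x → ¬ Dp P y → x.1.val ≠ y.1.val → G.Adj x y := by
    intro x y hx hy h1
    exact ⟨fun h => h1 (by rw [h]), Or.inr (Or.inl ⟨hx, hy⟩)⟩
  rw [hGdef, gen_adj] at hnadj
  push_neg at hnadj
  have hbig := hnadj hne1
  by_cases hud : Dp P u <;> by_cases hwd : Dp P w
  · -- both special: missing R-edge
    set a := u.1.val with ha
    set b := w.1.val with hb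
    have hab : a ≠ b := fun h => hne1 (Fin.val_injective h)
    have hnR : ¬ R a b := hbig.1 hud hwd
    obtain ⟨I, hIcard, hIP, hIR, haI, hbI, hIRab⟩ := S1 a b hud.1 hwd.1 hab hnR
    have hIk : ∀ c ∈ I, c < k := fun c hc => lt_of_lt_of_le (hIP c hc) hkP
    -- find a free part f
    have hTcard : (insert a (insert b I)).card < k := by
      calc (insert a (insert b I)).card ≤ I.card + 2 := by
            apply le_trans (Finset.card_insert_le _ _)
            have := Finset.card_insert_le b I
            omega
        _ < k := by omega
    have hfree : ∃ f, f < k ∧ f ∉ insert a (insert b I) := by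
      by_contra hcon
      push_neg at hcon
      have : Finset.range k ⊆ insert a (insert b I) := by
        intro f hf
        exact hcon f (Finset.mem_range.mp hf)
      have := Finset.card_le_card this
      rw [Finset.card_range] at this
      omega
    obtain ⟨f, hfk, hfT⟩ := hfree
    simp only [Finset.mem_insert] at hfT
    push_neg at hfT
    set wf : Fin k × Fin n := (⟨f, hfk⟩, ⟨1, by omega⟩) with hwf
    have hwfnD : ¬ Dp P wf := by
      intro h
      exact absurd h.2 (by simp [hwf])
    set C : Finset (Fin k × Fin n) := insert u (insert w (insert wf (DI I hIk hn0))) with hC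
    have hmemDI : ∀ x ∈ DI I hIk hn0, Dp P x ∧ x.1.val ∈ I := by
      intro x hx
      rw [mem_DI] at hx
      exact ⟨⟨hIP _ hx.1, by rw [hx.2]⟩, hx.1⟩
    have hDIadj : ∀ x ∈ DI I hIk hn0, ∀ y ∈ DI I hIk hn0, x ≠ y → G.Adj x y := by
      intro x hx y hy hxy
      obtain ⟨hxD, hxI⟩ := hmemDI x hx
      obtain ⟨hyD, hyI⟩ := hmemDI y hy
      have hvne : x.1.val ≠ y.1.val := by
        intro h
        apply hxy
        have h1 : x.1 = y.1 := Fin.val_injective h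
        have h2 : x.2 = y.2 := ((mem_DI.mp hx).2).trans ((mem_DI.mp hy).2).symm
        exact Prod.ext h1 h2
      exact adj_DD x y hxD hyD hvne (hIR hxI hyI hvne)
    -- u, w, wf not in DI, pairwise distinct
    have huDI : u ∉ DI I hIk hn0 := fun h => haI ((mem_DI.mp h).1)
    have hwDI : w ∉ DI I hIk hn0 := fun h => hbI ((mem_DI.mp h).1)
    have hwfDI : wf ∉ DI I hIk hn0 := fun h => hfT.2.2 ((mem_DI.mp h).1)
    have huwf : u ≠ wf := by
      intro h
      apply hfT.1
      rw [ha, h]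
    have hwwf : w ≠ wf := by
      intro h
      apply hfT.2.1
      rw [hb, h]
    -- adjacency of wf to D-vertices
    have hwfadj : ∀ x : Fin k × Fin n, Dp P x → x.1.val ≠ f → G.Adj x wf := by
      intro x hx hxf
      exact adj_DN x wf hx hwfnD (by simpa [hwf] using hxf)
    have hclique : G'.IsNClique (s + 3) C := by
      constructor
      · rw [SimpleGraph.isClique_iff, hC]
        simp only [Finset.coe_insert]
        rw [@Set.pairwise_insert_of_symm _ _ _ _ ⟨hsymm⟩, @Set.pairwise_insert_of_symm _ _ _ _ ⟨hsymm⟩,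
          @Set.pairwise_insert_of_symm _ _ _ _ ⟨hsymm⟩]
        refine ⟨⟨⟨?_, ?_⟩, ?_⟩, ?_⟩
        · intro x hx y hy hxy
          exact hGle (hDIadj x (by exact_mod_cast hx) y (by exact_mod_cast hy) hxy)
        · intro x hx hne
          exact hsymm (hGle (hwfadj x (hmemDI x (by exact_mod_cast hx)).1
            (fun h => hfT.2.2 (h ▸ (hmemDI x (by exact_mod_cast hx)).2))))
        · rintro x hx hne
          simp only [Set.mem_insert_iff] at hx
          rcases hx with rfl | hx
          · exact hGle (hwfadj w hwd (fun h => hfT.2.1 h.symm))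
          · obtain ⟨hxD, hxI⟩ := hmemDI x (by exact_mod_cast hx)
            have : b ≠ x.1.val := fun h => hbI (h ▸ hxI)
            exact hGle (adj_DD w x hwd hxD (fun h => this h) ((hIRab _ hxI).2))
        · rintro x hx hne
          simp only [Set.mem_insert_iff] at hx
          rcases hx with rfl | rfl | hx
          · exact hG'uw
          · exact hGle (hwfadj u hud (fun h => hfT.1 h.symm))
          · obtain ⟨hxD, hxI⟩ := hmemDI x (by exact_mod_cast hx)
            have : a ≠ x.1.val := fun h => haI (h ▸ hxI)
            exact hGle (adj_DD u x hud hxD (fun h => this h) (hIRab _ hxI).1)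
      · rw [hC]
        rw [Finset.card_insert_of_notMem, Finset.card_insert_of_notMem,
          Finset.card_insert_of_notMem hwfDI, card_DI, hIcard]
        · simp only [Finset.mem_insert]
          push_neg
          exact ⟨hwwf, hwDI⟩
        · simp only [Finset.mem_insert]
          push_neg
          exact ⟨hneuw, huwf, huDI⟩
    exact hCF C hclique
  · exact hwd (hbig.2.1 hud)
  · exact (hbig.2.2.1 hud) hwd
  · -- both non-special
    set i := u.1.val with hi
    set j := w.1.val with hj
    have hij : i ≠ j := fun h => hne1 (Fin.val_injective h)
    have hnRn : ¬ Rn i j := hbig.2.2.2 hud hwd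
    obtain ⟨I, hIcard, hIP, hIR, hiI, hjI⟩ := S2 i j hij hnRn
    have hIk : ∀ c ∈ I, c < k := fun c hc => lt_of_lt_of_le (hIP c hc) hkP
    set C : Finset (Fin k × Fin n) := insert u (insert w (DI I hIk hn0)) with hC
    have hmemDI : ∀ x ∈ DI I hIk hn0, Dp P x ∧ x.1.val ∈ I := by
      intro x hx
      rw [mem_DI] at hx
      exact ⟨⟨hIP _ hx.1, by rw [hx.2]⟩, hx.1⟩
    have hDIadj : ∀ x ∈ DI I hIk hn0, ∀ y ∈ DI I hIk hn0, x ≠ y → G.Adj x y := by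
      intro x hx y hy hxy
      obtain ⟨hxD, hxI⟩ := hmemDI x hx
      obtain ⟨hyD, hyI⟩ := hmemDI y hy
      have hvne : x.1.val ≠ y.1.val := by
        intro h
        apply hxy
        have h1 : x.1 = y.1 := Fin.val_injective h
        have h2 : x.2 = y.2 := ((mem_DI.mp hx).2).trans ((mem_DI.mp hy).2).symm
        exact Prod.ext h1 h2
      exact adj_DD x y hxD hyD hvne (hIR hxI hyI hvne)
    have huDI : u ∉ DI I hIk hn0 := fun h => hiI ((mem_DI.mp h).1)
    have hwDI : w ∉ DI I hIk hn0 := fun h => hjI ((mem_DI.mp h).1)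
    have hclique : G'.IsNClique (s + 3) C := by
      constructor
      · rw [SimpleGraph.isClique_iff, hC]
        simp only [Finset.coe_insert]
        rw [@Set.pairwise_insert_of_symm _ _ _ _ ⟨hsymm⟩, @Set.pairwise_insert_of_symm _ _ _ _ ⟨hsymm⟩]
        refine ⟨⟨?_, ?_⟩, ?_⟩
        · intro x hx y hy hxy
          exact hGle (hDIadj x (by exact_mod_cast hx) y (by exact_mod_cast hy) hxy)
        · intro x hx hne
          obtain ⟨hxD, hxI⟩ := hmemDI x (by exact_mod_cast hx)
          have hne2 : x.1.val ≠ j := fun h => hjI (h ▸ hxI)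
          exact hsymm (hGle (adj_DN x w hxD hwd hne2))
        · rintro x hx hne
          simp only [Set.mem_insert_iff] at hx
          rcases hx with rfl | hx
          · exact hG'uw
          · obtain ⟨hxD, hxI⟩ := hmemDI x (by exact_mod_cast hx)
            have hne2 : x.1.val ≠ i := fun h => hiI (h ▸ hxI)
            exact hsymm (hGle (adj_DN x u hxD hud hne2))
      · rw [hC]
        rw [Finset.card_insert_of_notMem, Finset.card_insert_of_notMem hwDI,
          card_DI, hIcard]
        · simp only [Finset.mem_insert]
          push_neg
          exact ⟨hneuw, huDI⟩
    exact hCF C hclique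

end MasterSat


section Count
variable {s k n P : ℕ} {R Rn : ℕ → ℕ → Prop} {hR : ∀ a b, R a b → R b a}
  {hRn : ∀ a b, Rn a b → Rn b a}

lemma card_filter_val {k : ℕ} (p : ℕ → Prop) [DecidablePred p]
    [DecidablePred (fun i : Fin k => p i.val)] :
    (univ.filter (fun i : Fin k => p i.val)).card = ((range k).filter p).card := by
  apply Finset.card_nbij (i := Fin.val)
  · intro a ha
    simp only [Finset.mem_coe, Finset.mem_filter, Finset.mem_range, Finset.mem_univ, true_and] at ha ⊢
    exact ⟨a.isLt, ha⟩
  · intro a _ b _ h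
    exact Fin.val_injective h
  · intro b hb
    simp only [Finset.coe_filter, Finset.mem_range, Set.mem_setOf_eq, Finset.mem_univ,
      true_and, Set.mem_image, Finset.mem_coe] at hb ⊢
    exact ⟨⟨b, hb.1⟩, hb.2, rfl⟩

lemma card_filter_prod {k n : ℕ} (p q : ℕ → Prop) [DecidablePred p] [DecidablePred q]
    [DecidablePred (fun x : Fin k × Fin n => p x.1.val ∧ q x.2.val)]
    [DecidablePred (fun i : Fin k => p i.val)] [DecidablePred (fun b : Fin n => q b.val)] :
    (univ.filter (fun x : Fin k × Fin n => p x.1.val ∧ q x.2.val)).card =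
      ((range k).filter p).card * ((range n).filter q).card := by
  have h1 : (univ : Finset (Fin k × Fin n)) = univ ×ˢ univ := by
    rw [Finset.univ_product_univ]
  rw [h1]
  rw [show (filter (fun x : Fin k × Fin n => p x.1.val ∧ q x.2.val) (univ ×ˢ univ)) =
    (filter (fun i : Fin k => p i.val) univ) ×ˢ (filter (fun b : Fin n => q b.val) univ) from ?_ ,
    Finset.card_product, card_filter_val, card_filter_val]
  ext x
  simp only [Finset.mem_filter, Finset.mem_product, Finset.mem_univ, true_and]

lemma range_filter_ne {k a : ℕ} (ha : a < k) :
    ((range k).filter fun c => ¬(c = a)).card = k - 1 := by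
  have : ((range k).filter fun c => ¬(c = a)) = (range k).erase a := by
    ext c
    simp [Finset.mem_erase, and_comm]
  rw [this, Finset.card_erase_of_mem (Finset.mem_range.mpr ha), Finset.card_range]

lemma range_filter_eq0 {n : ℕ} (hn : 0 < n) :
    ((range n).filter fun b => b = 0).card = 1 := by
  have : ((range n).filter fun b => b = 0) = {0} := by
    ext b
    simp only [Finset.mem_filter, Finset.mem_range, Finset.mem_singleton]
    omega
  rw [this, Finset.card_singleton]

lemma range_filter_not_lt {k P : ℕ} (h : P ≤ k) :
    ((range k).filter fun c => ¬(c < P)).card = k - P := by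
  have : ((range k).filter fun c => ¬(c < P)) = range k \ range P := by
    ext c
    simp only [Finset.mem_filter, Finset.mem_range, Finset.mem_sdiff]
  rw [this, Finset.card_sdiff_of_subset (Finset.range_subset_range.mpr h), Finset.card_range,
    Finset.card_range]

lemma range_filter_lt {k P : ℕ} (h : P ≤ k) :
    ((range k).filter fun c => c < P).card = P := by
  have : ((range k).filter fun c => c < P) = range P := by
    ext c
    simp only [Finset.mem_filter, Finset.mem_range]
    omega
  rw [this, Finset.card_range]

lemma range_filter_lt_and {k P : ℕ} (X : ℕ → Prop) [DecidablePred X]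
    [DecidablePred (fun c => c < P ∧ X c)] (h : P ≤ k) :
    ((range k).filter fun c => c < P ∧ X c).card = ((range P).filter X).card := by
  apply Finset.card_nbij (i := id)
  · intro c hc
    simp only [Finset.mem_coe, Finset.mem_filter, Finset.mem_range] at hc ⊢
    exact ⟨hc.2.1, hc.2.2⟩
  · intro a _ b _ hab
    exact hab
  · intro c hc
    simp only [Finset.coe_filter, Set.mem_setOf_eq, Finset.mem_range, Set.mem_image,
      Finset.mem_coe, Finset.mem_filter] at hc ⊢
    exact ⟨c, ⟨lt_of_lt_of_le hc.1 h, hc.1, hc.2⟩, rfl⟩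

lemma range_filter_ne0 {n : ℕ} (hn : 0 < n) :
    ((range n).filter fun b => ¬(b = 0)).card = n - 1 := by
  have h1 := range_filter_eq0 (n := n) hn
  have h2 := Finset.card_filter_add_card_filter_not (s := range n) (fun b => b = 0)
  rw [Finset.card_range, h1] at h2
  omega

lemma degree_eq_card_filter (G : SimpleGraph (Fin k × Fin n)) (v : Fin k × Fin n) :
    G.degree v = (univ.filter (fun x => G.Adj v x)).card := by
  rw [← SimpleGraph.neighborFinset_eq_filter]
  rfl

lemma deg_D (hkP : P ≤ k) (hn : 1 ≤ n) (gR : ℕ)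
    (hgR : ∀ a, a < P → (((range P).filter fun c => ¬(c = a) ∧ R a c)).card = gR)
    (v : Fin k × Fin n) (hv : Dp P v) :
    (gen k n P R Rn hR hRn).degree v = (k - 1) * (n - 1) + (k - P) + gR := by
  set a := v.1.val with ha
  rw [degree_eq_card_filter]
  have key : (univ.filter (fun x => (gen k n P R Rn hR hRn).Adj v x)) =
      (univ.filter (fun x : Fin k × Fin n => ¬(x.1.val = a) ∧ ¬(x.2.val = 0))) ∪
      ((univ.filter (fun x : Fin k × Fin n => ¬(x.1.val < P) ∧ x.2.val = 0)) ∪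
       (univ.filter (fun x : Fin k × Fin n => (x.1.val < P ∧ ¬(x.1.val = a) ∧ R a x.1.val) ∧ x.2.val = 0))) := by
    ext x
    simp only [Finset.mem_filter, Finset.mem_univ, true_and, Finset.mem_union, gen_adj, Dp,
      ne_eq, ← Fin.val_eq_val]
    obtain ⟨hvP, hv0⟩ := hv
    constructor
    · rintro ⟨h1, ⟨-, ⟨hxP, hx0⟩, hr⟩ | ⟨-, hx⟩ | ⟨hvD, -⟩ | ⟨hvD, -⟩⟩
      · exact Or.inr (Or.inr ⟨⟨hxP, fun h => h1 h.symm, hr⟩, hx0⟩)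
      · by_cases hx0 : x.2.val = 0
        · by_cases hxP : x.1.val < P
          · exact absurd ⟨hxP, hx0⟩ hx
          · exact Or.inr (Or.inl ⟨hxP, hx0⟩)
        · exact Or.inl ⟨fun h => h1 h.symm, hx0⟩
      · exact absurd ⟨hvP, hv0⟩ hvD
      · exact absurd ⟨hvP, hv0⟩ hvD
    · rintro (⟨h1, h2⟩ | ⟨h1, h2⟩ | ⟨⟨h1, h2, h3⟩, h4⟩)
      · exact ⟨fun h => h1 h.symm, Or.inr (Or.inl ⟨⟨hvP, hv0⟩, fun h => h2 h.2⟩)⟩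
      · refine ⟨fun h => h1 (h ▸ hvP), Or.inr (Or.inl ⟨⟨hvP, hv0⟩, fun h => h1 h.1⟩)⟩
      · exact ⟨fun h => h2 h.symm, Or.inl ⟨⟨hvP, hv0⟩, ⟨h1, h4⟩, h3⟩⟩
  rw [key]
  have haP : a < P := hv.1
  have hak : a < k := lt_of_lt_of_le haP hkP
  have hd1 : Disjoint
      (univ.filter (fun x : Fin k × Fin n => ¬(x.1.val < P) ∧ x.2.val = 0))
      (univ.filter (fun x : Fin k × Fin n => (x.1.val < P ∧ ¬(x.1.val = a) ∧ R a x.1.val) ∧ x.2.val = 0)) := by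
    rw [Finset.disjoint_left]
    intro x hx hy
    simp only [Finset.mem_filter] at hx hy
    exact hx.2.1 hy.2.1.1
  have hd2 : Disjoint
      (univ.filter (fun x : Fin k × Fin n => ¬(x.1.val = a) ∧ ¬(x.2.val = 0)))
      ((univ.filter (fun x : Fin k × Fin n => ¬(x.1.val < P) ∧ x.2.val = 0)) ∪
       (univ.filter (fun x : Fin k × Fin n => (x.1.val < P ∧ ¬(x.1.val = a) ∧ R a x.1.val) ∧ x.2.val = 0))) := by
    rw [Finset.disjoint_left]
    intro x hx hy
    simp only [Finset.mem_filter, Finset.mem_union] at hx hy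
    rcases hy with hy | hy <;> exact hx.2.2 hy.2.2
  rw [Finset.card_union_of_disjoint hd2, Finset.card_union_of_disjoint hd1]
  rw [card_filter_prod (p := fun c => ¬(c = a)) (q := fun b => ¬(b = 0)),
    card_filter_prod (p := fun c => ¬(c < P)) (q := fun b => b = 0),
    card_filter_prod (p := fun c => c < P ∧ ¬(c = a) ∧ R a c) (q := fun b => b = 0),
    range_filter_ne hak,
    range_filter_not_lt hkP, range_filter_eq0 hn, range_filter_lt_and (X := fun c => ¬(c = a) ∧ R a c) hkP, hgR a haP]
  rw [range_filter_ne0 hn]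
  obtain ⟨A, hA⟩ : ∃ A, (k - 1) * (n - 1) = A := ⟨_, rfl⟩
  rw [hA]
  omega


lemma deg_N1 (hkP : P ≤ k) (hn : 1 ≤ n) (cN : ℕ)
    (hRnP : ∀ i j, Rn i j → i < P ∧ j < P) (hRnIrr : ∀ i, ¬ Rn i i)
    (hcN : ∀ a, a < P → (((range P).filter fun c => Rn a c)).card = cN)
    (v : Fin k × Fin n) (hv1 : v.1.val < P) (hv2 : ¬ (v.2.val = 0)) :
    (gen k n P R Rn hR hRn).degree v = (P - 1) + cN * (n - 1) := by
  set a := v.1.val with ha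
  have hvnD : ¬ Dp P v := fun h => hv2 h.2
  rw [degree_eq_card_filter]
  have key : (univ.filter (fun x => (gen k n P R Rn hR hRn).Adj v x)) =
      (univ.filter (fun x : Fin k × Fin n => (x.1.val < P ∧ ¬(x.1.val = a)) ∧ x.2.val = 0)) ∪
      (univ.filter (fun x : Fin k × Fin n => Rn a x.1.val ∧ ¬(x.2.val = 0))) := by
    ext x
    simp only [Finset.mem_filter, Finset.mem_univ, true_and, Finset.mem_union, gen_adj, Dp,
      ne_eq, ← Fin.val_eq_val]
    constructor
    · rintro ⟨h1, ⟨hvD, -⟩ | ⟨hvD, -⟩ | ⟨-, hxP, hx0⟩ | ⟨-, hxD, hrn⟩⟩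
      · exact absurd hvD.2 hv2
      · exact absurd hvD.2 hv2
      · exact Or.inl ⟨⟨hxP, fun h => h1 h.symm⟩, hx0⟩
      · exact Or.inr ⟨hrn, fun h0 => hxD ⟨(hRnP _ _ hrn).2, h0⟩⟩
    · rintro (⟨⟨h1, h2⟩, h3⟩ | ⟨h1, h2⟩)
      · exact ⟨fun h => h2 h.symm, Or.inr (Or.inr (Or.inl ⟨hvnD, h1, h3⟩))⟩
      · refine ⟨fun h => hRnIrr a (by rw [← h] at h1; exact h1), Or.inr (Or.inr (Or.inr
          ⟨hvnD, fun hD => h2 hD.2, h1⟩))⟩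
  rw [key]
  have hd : Disjoint
      (univ.filter (fun x : Fin k × Fin n => (x.1.val < P ∧ ¬(x.1.val = a)) ∧ x.2.val = 0))
      (univ.filter (fun x : Fin k × Fin n => Rn a x.1.val ∧ ¬(x.2.val = 0))) := by
    rw [Finset.disjoint_left]
    intro x hx hy
    simp only [Finset.mem_filter] at hx hy
    exact hy.2.2 hx.2.2
  rw [Finset.card_union_of_disjoint hd,
    card_filter_prod (p := fun c => c < P ∧ ¬(c = a)) (q := fun b => b = 0),
    card_filter_prod (p := fun c => Rn a c) (q := fun b => ¬(b = 0)),
    range_filter_lt_and (X := fun c => ¬(c = a)) hkP, range_filter_eq0 hn,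
    range_filter_ne0 hn]
  have h1 : ((range P).filter fun c => ¬(c = a)).card = P - 1 := range_filter_ne hv1
  have h2 : ((range k).filter fun c => Rn a c) = ((range P).filter fun c => Rn a c) := by
    ext c
    simp only [Finset.mem_filter, Finset.mem_range]
    constructor
    · rintro ⟨-, h⟩; exact ⟨(hRnP _ _ h).2, h⟩
    · rintro ⟨hc, h⟩; exact ⟨lt_of_lt_of_le hc hkP, h⟩
  rw [h1, h2, hcN a hv1]
  ring

lemma deg_N2 (hkP : P ≤ k) (hn : 1 ≤ n)
    (hRnP : ∀ i j, Rn i j → i < P ∧ j < P)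
    (v : Fin k × Fin n) (hv1 : ¬ (v.1.val < P)) :
    (gen k n P R Rn hR hRn).degree v = P := by
  set a := v.1.val with ha
  have hvnD : ¬ Dp P v := fun h => hv1 h.1
  rw [degree_eq_card_filter]
  have key : (univ.filter (fun x => (gen k n P R Rn hR hRn).Adj v x)) =
      (univ.filter (fun x : Fin k × Fin n => x.1.val < P ∧ x.2.val = 0)) := by
    ext x
    simp only [Finset.mem_filter, Finset.mem_univ, true_and, gen_adj, Dp,
      ne_eq, ← Fin.val_eq_val]
    constructor
    · rintro ⟨h1, ⟨hvD, -⟩ | ⟨hvD, -⟩ | ⟨-, hx⟩ | ⟨-, -, hrn⟩⟩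
      · exact absurd hvD.1 hv1
      · exact absurd hvD.1 hv1
      · exact hx
      · exact absurd (hRnP _ _ hrn).1 hv1
    · rintro ⟨h1, h2⟩
      exact ⟨fun h => hv1 (by rw [ha, h]; exact h1), Or.inr (Or.inr (Or.inl ⟨hvnD, h1, h2⟩))⟩
  rw [key, card_filter_prod (p := fun c => c < P) (q := fun b => b = 0),
    range_filter_lt hkP, range_filter_eq0 hn]
  ring

lemma master_count (hkP : P ≤ k) (hn : 1 ≤ n) (gR cN : ℕ)
    (hRnP : ∀ i j, Rn i j → i < P ∧ j < P) (hRnIrr : ∀ i, ¬ Rn i i)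
    (hgR : ∀ a, a < P → (((range P).filter fun c => ¬(c = a) ∧ R a c)).card = gR)
    (hcN : ∀ a, a < P → (((range P).filter fun c => Rn a c)).card = cN) :
    2 * (gen k n P R Rn hR hRn).edgeFinset.card =
      P * ((k - 1) * (n - 1) + (k - P) + gR) +
      (P * (n - 1)) * ((P - 1) + cN * (n - 1)) + ((k - P) * n) * P := by
  rw [← SimpleGraph.sum_degrees_eq_twice_card_edges]
  rw [← Finset.sum_filter_add_sum_filter_not univ (fun v : Fin k × Fin n => Dp P v)
    (fun v => (gen k n P R Rn hR hRn).degree v)]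
  rw [← Finset.sum_filter_add_sum_filter_not
    (univ.filter (fun v : Fin k × Fin n => ¬ Dp P v)) (fun v => v.1.val < P)
    (fun v => (gen k n P R Rn hR hRn).degree v)]
  have e1 : ∑ v ∈ univ.filter (fun v : Fin k × Fin n => Dp P v),
      (gen k n P R Rn hR hRn).degree v = P * ((k - 1) * (n - 1) + (k - P) + gR) := by
    rw [Finset.sum_congr rfl (fun v hv => deg_D (hR := hR) (hRn := hRn) hkP hn gR hgR v
      (Finset.mem_filter.mp hv).2), Finset.sum_const, smul_eq_mul]
    congr 1
    have : (univ.filter (fun v : Fin k × Fin n => Dp P v)) =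
        (univ.filter (fun x : Fin k × Fin n => x.1.val < P ∧ x.2.val = 0)) := by
      ext x
      rw [Finset.mem_filter, Finset.mem_filter]; exact Iff.rfl
    rw [this, card_filter_prod (p := fun c => c < P) (q := fun b => b = 0),
      range_filter_lt hkP, range_filter_eq0 hn, mul_one]
  have e2 : ∑ v ∈ (univ.filter (fun v : Fin k × Fin n => ¬ Dp P v)).filter
      (fun v => v.1.val < P), (gen k n P R Rn hR hRn).degree v =
      (P * (n - 1)) * ((P - 1) + cN * (n - 1)) := by
    rw [Finset.filter_filter]
    have hset : (univ.filter (fun v : Fin k × Fin n => ¬ Dp P v ∧ v.1.val < P)) =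
        (univ.filter (fun x : Fin k × Fin n => x.1.val < P ∧ ¬(x.2.val = 0))) := by
      ext x
      rw [Finset.mem_filter, Finset.mem_filter]; simp only [Dp, Finset.mem_univ, true_and]
      constructor
      · rintro ⟨h1, h2⟩
        exact ⟨h2, fun h0 => h1 ⟨h2, h0⟩⟩
      · rintro ⟨h1, h2⟩
        exact ⟨fun h => h2 h.2, h1⟩
    rw [hset]
    rw [Finset.sum_congr rfl (fun v hv => deg_N1 (hR := hR) (hRn := hRn) hkP hn cN hRnP hRnIrr
      hcN v (Finset.mem_filter.mp hv).2.1 (Finset.mem_filter.mp hv).2.2),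
      Finset.sum_const, smul_eq_mul]
    congr 1
    rw [card_filter_prod (p := fun c => c < P) (q := fun b => ¬(b = 0)),
      range_filter_lt hkP, range_filter_ne0 hn]
  have e3 : ∑ v ∈ (univ.filter (fun v : Fin k × Fin n => ¬ Dp P v)).filter
      (fun v => ¬ (v.1.val < P)), (gen k n P R Rn hR hRn).degree v = ((k - P) * n) * P := by
    rw [Finset.filter_filter]
    have hset : (univ.filter (fun v : Fin k × Fin n => ¬ Dp P v ∧ ¬(v.1.val < P))) =
        (univ.filter (fun x : Fin k × Fin n => ¬(x.1.val < P) ∧ True)) := by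
      ext x
      rw [Finset.mem_filter, Finset.mem_filter]; simp only [Dp, Finset.mem_univ, true_and, and_true]
      constructor
      · rintro ⟨-, h2⟩
        exact h2
      · rintro h1
        exact ⟨fun h => h1 h.1, h1⟩
    rw [hset]
    rw [Finset.sum_congr rfl (fun v hv => deg_N2 (hR := hR) (hRn := hRn) hkP hn hRnP v
      (Finset.mem_filter.mp hv).2.1),
      Finset.sum_const, smul_eq_mul]
    congr 1
    rw [card_filter_prod (p := fun c => ¬(c < P)) (q := fun b => True),
      range_filter_not_lt hkP, Finset.filter_true, Finset.card_range]
  rw [e1, e2, e3]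
  exact (add_assoc _ _ _).symm

end Count


section ConsB
/-! Construction B : complement of an odd cycle on `2s+3` special vertices. -/

def cyc (s a b : ℕ) : Prop :=
  b = a + 1 ∨ a = b + 1 ∨ (a = 2*s+2 ∧ b = 0) ∨ (b = 2*s+2 ∧ a = 0)

def cycRel (s : ℕ) : ℕ → ℕ → Prop := fun a b => ¬ cyc s a b

def RnB : ℕ → ℕ → Prop := fun _ _ => False

lemma cycRel_symm (s : ℕ) : ∀ a b, cycRel s a b → cycRel s b a := by
  intro a b h hc
  apply h
  unfold cyc at hc ⊢
  omega

lemma RnB_symm : ∀ a b, RnB a b → RnB b a := fun _ _ h => h.elim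

lemma B_C1 (s : ℕ) : ∀ I : Finset ℕ, (∀ a ∈ I, a < 2*s+3) →
    (I : Set ℕ).Pairwise (cycRel s) → I.card ≤ s + 1 := by
  intro I hIlt hIR
  set σ : ℕ → ℕ := fun c => if c = 2*s+2 then 0 else c + 1 with hσ
  have hinj : Set.InjOn σ I := by
    intro x hx y hy hxy
    have hxm := hIlt x hx
    have hym := hIlt y hy
    simp only [hσ] at hxy
    split_ifs at hxy <;> omega
  have hdisj : Disjoint I (I.image σ) := by
    rw [Finset.disjoint_left]
    intro c hc hcJ
    simp only [Finset.mem_image] at hcJ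
    obtain ⟨d, hd, hdc⟩ := hcJ
    by_cases hdcne : d = c
    · subst hdcne
      have := hIlt d hd
      simp only [hσ] at hdc
      split_ifs at hdc <;> omega
    · have := hIR (Finset.mem_coe.mpr hd) (Finset.mem_coe.mpr hc) hdcne
      apply this
      unfold cyc
      simp only [hσ] at hdc
      split_ifs at hdc <;> omega
  have hsub : I ∪ I.image σ ⊆ range (2*s+3) := by
    intro c hc
    rw [Finset.mem_union] at hc
    rw [Finset.mem_range]
    rcases hc with hc | hc
    · exact hIlt c hc
    · simp only [Finset.mem_image] at hc
      obtain ⟨d, hd, hdc⟩ := hc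
      have := hIlt d hd
      simp only [hσ] at hdc
      split_ifs at hdc <;> omega
  have h1 := Finset.card_le_card hsub
  rw [Finset.card_union_of_disjoint hdisj, Finset.card_image_of_injOn hinj,
    Finset.card_range] at h1
  omega

lemma B_S1 (s : ℕ) : ∀ a b, a < 2*s+3 → b < 2*s+3 → a ≠ b → ¬ cycRel s a b →
    ∃ I : Finset ℕ, I.card = s ∧ (∀ c ∈ I, c < 2*s+3) ∧ (I : Set ℕ).Pairwise (cycRel s) ∧
      a ∉ I ∧ b ∉ I ∧ ∀ c ∈ I, cycRel s a c ∧ cycRel s b c := by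
  intro a b ha hb hab hnR
  have hcyc : cyc s a b := not_not.mp hnR
  unfold cyc at hcyc
  refine ⟨(range s).image (fun l =>
      if (if b = a + 1 ∨ (a = 2*s+2 ∧ b = 0) then a else b) + 3 + 2*l < 2*s+3
      then (if b = a + 1 ∨ (a = 2*s+2 ∧ b = 0) then a else b) + 3 + 2*l
      else (if b = a + 1 ∨ (a = 2*s+2 ∧ b = 0) then a else b) + 3 + 2*l - (2*s+3)),
    ?_, ?_, ?_, ?_, ?_, ?_⟩
  · rw [Finset.card_image_of_injOn, Finset.card_range]
    intro x hx y hy hxy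
    simp only [Finset.mem_coe, Finset.mem_range] at hx hy
    dsimp only at hxy
    split_ifs at hxy <;> omega
  · intro c hc
    simp only [Finset.mem_image, Finset.mem_range] at hc
    obtain ⟨l, hl, rfl⟩ := hc
    split_ifs <;> omega
  · intro x hx y hy hne hc
    simp only [Finset.mem_coe, Finset.coe_image, Set.mem_image, Finset.mem_coe,
      Finset.mem_range, Finset.coe_range, Set.mem_Iio] at hx hy
    obtain ⟨l, hl, rfl⟩ := hx
    obtain ⟨l', hl', rfl⟩ := hy
    unfold cyc at hc
    try dsimp only at hc
    split_ifs at hc <;> omega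
  · intro hmem
    simp only [Finset.mem_image, Finset.mem_range] at hmem
    obtain ⟨l, hl, hE⟩ := hmem
    split_ifs at hE <;> omega
  · intro hmem
    simp only [Finset.mem_image, Finset.mem_range] at hmem
    obtain ⟨l, hl, hE⟩ := hmem
    split_ifs at hE <;> omega
  · intro c hc
    simp only [Finset.mem_image, Finset.mem_range] at hc
    obtain ⟨l, hl, rfl⟩ := hc
    constructor
    · intro hc2
      unfold cyc at hc2
      split_ifs at hc2 <;> omega
    · intro hc2
      unfold cyc at hc2
      split_ifs at hc2 <;> omega

lemma B_S2 (s : ℕ) : ∀ p q : ℕ, ∃ I : Finset ℕ, I.card = s + 1 ∧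
    (∀ c ∈ I, c < 2*s+3) ∧ (I : Set ℕ).Pairwise (cycRel s) ∧ p ∉ I ∧ q ∉ I := by
  intro p q
  obtain ⟨r, hr, havoid⟩ : ∃ r, r < 2*s+3 ∧ ∀ l, l ≤ s →
      (if r + 2*l < 2*s+3 then r + 2*l else r + 2*l - (2*s+3)) ≠ p ∧
      (if r + 2*l < 2*s+3 then r + 2*l else r + 2*l - (2*s+3)) ≠ q := by
    by_cases hp : p < 2*s+3
    · by_cases hq1 : ∃ l, l ≤ s ∧ (if (if p+1 < 2*s+3 then p+1 else 0) + 2*l < 2*s+3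
          then (if p+1 < 2*s+3 then p+1 else 0) + 2*l
          else (if p+1 < 2*s+3 then p+1 else 0) + 2*l - (2*s+3)) = q
      · obtain ⟨l0, hl0, hE⟩ := hq1
        refine ⟨if p+2 < 2*s+3 then p+2 else p+2 - (2*s+3), by split_ifs <;> omega,
          fun l hl => ⟨?_, ?_⟩⟩
        · split_ifs <;> omega
        · split_ifs at hE ⊢ <;> omega
      · push_neg at hq1
        refine ⟨if p+1 < 2*s+3 then p+1 else 0, by split_ifs <;> omega,
          fun l hl => ⟨?_, hq1 l hl⟩⟩
        split_ifs <;> omega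
    · by_cases hq : q < 2*s+3
      · refine ⟨if q+1 < 2*s+3 then q+1 else 0, by split_ifs <;> omega,
          fun l hl => ⟨?_, ?_⟩⟩ <;> (split_ifs <;> omega)
      · exact ⟨0, by omega, fun l hl => by constructor <;> (split_ifs <;> omega)⟩
  refine ⟨(range (s+1)).image (fun l => if r + 2*l < 2*s+3 then r + 2*l
    else r + 2*l - (2*s+3)), ?_, ?_, ?_, ?_, ?_⟩
  · rw [Finset.card_image_of_injOn, Finset.card_range]
    intro x hx y hy hxy
    simp only [Finset.mem_coe, Finset.mem_range] at hx hy
    dsimp only at hxy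
    split_ifs at hxy <;> omega
  · intro c hc
    simp only [Finset.mem_image, Finset.mem_range] at hc
    obtain ⟨l, hl, rfl⟩ := hc
    split_ifs <;> omega
  · intro x hx y hy hne hc
    simp only [Finset.mem_coe, Finset.coe_image, Set.mem_image, Finset.mem_coe,
      Finset.mem_range, Finset.coe_range, Set.mem_Iio] at hx hy
    obtain ⟨l, hl, rfl⟩ := hx
    obtain ⟨l', hl', rfl⟩ := hy
    unfold cyc at hc
    try dsimp only at hc
    split_ifs at hc <;> omega
  · intro hmem
    simp only [Finset.mem_image, Finset.mem_range] at hmem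
    obtain ⟨l, hl, hE⟩ := hmem
    exact (havoid l (by omega)).1 hE
  · intro hmem
    simp only [Finset.mem_image, Finset.mem_range] at hmem
    obtain ⟨l, hl, hE⟩ := hmem
    exact (havoid l (by omega)).2 hE

lemma B_gR (s a : ℕ) (ha : a < 2*s+3) :
    ((range (2*s+3)).filter fun c => ¬(c = a) ∧ cycRel s a c).card = 2*s := by
  have hpair : ((range (2*s+3)).filter fun c => ¬(¬(c = a) ∧ cycRel s a c)) =
      {a, (if a = 2*s+2 then 0 else a+1), (if a = 0 then 2*s+2 else a - 1)} := by
    ext c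
    simp only [Finset.mem_filter, Finset.mem_range, Finset.mem_insert, Finset.mem_singleton,
      not_and_or, not_not, cycRel]
    unfold cyc
    split_ifs <;> omega
  have hcard3 : ({a, (if a = 2*s+2 then 0 else a+1), (if a = 0 then 2*s+2 else a - 1)} :
      Finset ℕ).card = 3 := by
    rw [Finset.card_insert_of_notMem, Finset.card_insert_of_notMem, Finset.card_singleton]
    · simp only [Finset.mem_singleton]
      split_ifs <;> omega
    · simp only [Finset.mem_insert, Finset.mem_singleton]
      push_neg
      constructor <;> (split_ifs <;> omega)
  have htot := Finset.card_filter_add_card_filter_not (s := range (2*s+3))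
    (fun c => ¬(c = a) ∧ cycRel s a c)
  rw [Finset.card_range, hpair, hcard3] at htot
  omega

lemma B_cN (s a : ℕ) : ((range (2*s+3)).filter fun c => RnB a c).card = 0 := by
  rw [Finset.card_eq_zero]
  ext c
  rw [Finset.mem_filter]; simp [RnB]

end ConsB


section ConsA
/-! Construction A : complete graph minus a perfect matching on `2s+2` special vertices,
    plus complete bipartite graphs between matched parts. -/

def mate (s a b : ℕ) : Prop := b = a + (s+1) ∨ a = b + (s+1)

def mateRel (s : ℕ) : ℕ → ℕ → Prop := fun a b => ¬ mate s a b

def RnA (s : ℕ) : ℕ → ℕ → Prop := fun a b => a < 2*s+2 ∧ b < 2*s+2 ∧ mate s a b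

lemma mateRel_symm (s : ℕ) : ∀ a b, mateRel s a b → mateRel s b a := by
  intro a b h hm
  apply h
  unfold mate at hm ⊢
  omega

lemma RnA_symm (s : ℕ) : ∀ a b, RnA s a b → RnA s b a := by
  intro a b h
  unfold RnA mate at h ⊢
  omega

lemma RnA_lt (s : ℕ) : ∀ i j, RnA s i j → i < 2*s+2 ∧ j < 2*s+2 := fun _ _ h => ⟨h.1, h.2.1⟩

lemma RnA_irr (s : ℕ) : ∀ i, ¬ RnA s i i := by
  intro i h
  unfold RnA mate at h
  omega

lemma A_C1 (s : ℕ) : ∀ I : Finset ℕ, (∀ a ∈ I, a < 2*s+2) →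
    (I : Set ℕ).Pairwise (mateRel s) → I.card ≤ s + 1 := by
  intro I hIlt hIR
  set ρ : ℕ → ℕ := fun c => if c < s+1 then c else c - (s+1) with hρ
  have hinj : Set.InjOn ρ I := by
    intro x hx y hy hxy
    have hxm := hIlt x hx
    have hym := hIlt y hy
    by_contra hne
    have := hIR hx hy hne
    apply this
    unfold mate
    simp only [hρ] at hxy
    split_ifs at hxy <;> omega
  have hsub : I.image ρ ⊆ range (s+1) := by
    intro c hc
    simp only [Finset.mem_image] at hc
    obtain ⟨d, hd, hdc⟩ := hc
    have := hIlt d hd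
    rw [Finset.mem_range]
    simp only [hρ] at hdc
    split_ifs at hdc <;> omega
  have := Finset.card_le_card hsub
  rw [Finset.card_image_of_injOn hinj, Finset.card_range] at this
  exact this

lemma A_C2 (s : ℕ) : ∀ i j, RnA s i j → ∀ I : Finset ℕ, (∀ a ∈ I, a < 2*s+2) →
    (I : Set ℕ).Pairwise (mateRel s) → i ∉ I → j ∉ I → I.card ≤ s := by
  intro i j hij I hIlt hIR hiI hjI
  have hi2 := hij.1
  have hj2 := hij.2.1
  have hm := hij.2.2
  set ρ : ℕ → ℕ := fun c => if c < s+1 then c else c - (s+1) with hρ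
  have hinj : Set.InjOn ρ I := by
    intro x hx y hy hxy
    by_contra hne
    have := hIR hx hy hne
    apply this
    unfold mate
    have hxm := hIlt x hx
    have hym := hIlt y hy
    simp only [hρ] at hxy
    split_ifs at hxy <;> omega
  have hsub : I.image ρ ⊆ (range (s+1)).erase (if i < s+1 then i else i - (s+1)) := by
    intro c hc
    simp only [Finset.mem_image] at hc
    obtain ⟨d, hd, hdc⟩ := hc
    have hdm := hIlt d hd
    rw [Finset.mem_erase, Finset.mem_range]
    have hdi : d ≠ i := fun h => hiI (h ▸ hd)
    have hdj : d ≠ j := fun h => hjI (h ▸ hd)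
    constructor
    · intro hcon
      simp only [hρ] at hdc
      -- ρ d = ρ i means d = i or d and i are mates; then d = j, contradiction
      unfold mate at hm
      split_ifs at hdc hcon <;> omega
    · simp only [hρ] at hdc
      split_ifs at hdc <;> omega
  have := Finset.card_le_card hsub
  rw [Finset.card_image_of_injOn hinj, Finset.card_erase_of_mem, Finset.card_range] at this
  · omega
  · rw [Finset.mem_range]
    split_ifs <;> omega

lemma A_C3 (s : ℕ) : ∀ i j l, i ≠ j → i ≠ l → j ≠ l → RnA s i j → RnA s i l →
    RnA s j l → False := by
  intro i j l h1 h2 h3 r1 r2 r3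
  unfold RnA mate at r1 r2 r3
  omega

lemma A_S1 (s : ℕ) : ∀ a b, a < 2*s+2 → b < 2*s+2 → a ≠ b → ¬ mateRel s a b →
    ∃ I : Finset ℕ, I.card = s ∧ (∀ c ∈ I, c < 2*s+2) ∧ (I : Set ℕ).Pairwise (mateRel s) ∧
      a ∉ I ∧ b ∉ I ∧ ∀ c ∈ I, mateRel s a c ∧ mateRel s b c := by
  intro a b ha hb hab hnR
  have hm : mate s a b := not_not.mp hnR
  unfold mate at hm
  refine ⟨(range (s+1)).erase (if a < s+1 then a else a - (s+1)), ?_, ?_, ?_, ?_, ?_, ?_⟩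
  · rw [Finset.card_erase_of_mem, Finset.card_range]
    · omega
    · rw [Finset.mem_range]
      split_ifs <;> omega
  · intro c hc
    rw [Finset.mem_erase, Finset.mem_range] at hc
    omega
  · intro x hx y hy hne hc
    simp only [Finset.mem_coe, Finset.coe_erase, Set.mem_diff, Finset.mem_coe,
      Finset.mem_range, Set.mem_singleton_iff, Finset.coe_range, Set.mem_Iio] at hx hy
    unfold mate at hc
    omega
  · rw [Finset.mem_erase, Finset.mem_range]
    split_ifs <;> omega
  · rw [Finset.mem_erase, Finset.mem_range]
    split_ifs <;> omega
  · intro c hc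
    rw [Finset.mem_erase, Finset.mem_range] at hc
    rcases hc with ⟨hc1, hc2⟩
    constructor <;> (intro hc3; unfold mate at hc3; split_ifs at hc1 <;> omega)

lemma A_S2 (s : ℕ) : ∀ i j, i ≠ j → ¬ RnA s i j → ∃ I : Finset ℕ, I.card = s + 1 ∧
    (∀ c ∈ I, c < 2*s+2) ∧ (I : Set ℕ).Pairwise (mateRel s) ∧ i ∉ I ∧ j ∉ I := by
  intro i j hij hnR
  unfold RnA mate at hnR
  refine ⟨(range (s+1)).image (fun c =>
      if c + (s+1) = i ∨ c + (s+1) = j then c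
      else (if c = i ∨ c = j then c + (s+1) else c)), ?_, ?_, ?_, ?_, ?_⟩
  · rw [Finset.card_image_of_injOn, Finset.card_range]
    intro x hx y hy hxy
    simp only [Finset.mem_coe, Finset.mem_range] at hx hy
    dsimp only at hxy
    split_ifs at hxy <;> omega
  · intro c hc
    simp only [Finset.mem_image, Finset.mem_range] at hc
    obtain ⟨l, hl, rfl⟩ := hc
    split_ifs <;> omega
  · intro x hx y hy hne hc
    simp only [Finset.mem_coe, Finset.coe_image, Set.mem_image, Finset.mem_coe,
      Finset.mem_range, Finset.coe_range, Set.mem_Iio] at hx hy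
    obtain ⟨l, hl, rfl⟩ := hx
    obtain ⟨l', hl', rfl⟩ := hy
    unfold mate at hc
    try dsimp only at hc
    split_ifs at hc <;> omega
  · intro hmem
    simp only [Finset.mem_image, Finset.mem_range] at hmem
    obtain ⟨l, hl, hE⟩ := hmem
    split_ifs at hE <;> omega
  · intro hmem
    simp only [Finset.mem_image, Finset.mem_range] at hmem
    obtain ⟨l, hl, hE⟩ := hmem
    split_ifs at hE <;> omega

lemma A_gR (s a : ℕ) (ha : a < 2*s+2) :
    ((range (2*s+2)).filter fun c => ¬(c = a) ∧ mateRel s a c).card = 2*s := by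
  have hpair : ((range (2*s+2)).filter fun c => ¬(¬(c = a) ∧ mateRel s a c)) =
      {a, (if a < s+1 then a + (s+1) else a - (s+1))} := by
    ext c
    simp only [Finset.mem_filter, Finset.mem_range, Finset.mem_insert, Finset.mem_singleton,
      not_and_or, not_not, mateRel]
    unfold mate
    split_ifs <;> omega
  have hcard2 : ({a, (if a < s+1 then a + (s+1) else a - (s+1))} : Finset ℕ).card = 2 := by
    rw [Finset.card_insert_of_notMem, Finset.card_singleton]
    simp only [Finset.mem_singleton]
    split_ifs <;> omega
  have htot := Finset.card_filter_add_card_filter_not (s := range (2*s+2))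
    (fun c => ¬(c = a) ∧ mateRel s a c)
  rw [Finset.card_range, hpair, hcard2] at htot
  omega

lemma A_cN (s a : ℕ) (ha : a < 2*s+2) :
    ((range (2*s+2)).filter fun c => RnA s a c).card = 1 := by
  have h1 : ((range (2*s+2)).filter fun c => RnA s a c) =
      {(if a < s+1 then a + (s+1) else a - (s+1))} := by
    ext c
    simp only [Finset.mem_filter, Finset.mem_range, Finset.mem_singleton]
    unfold RnA mate
    split_ifs <;> omega
  rw [h1, Finset.card_singleton]

end ConsA

end Sat14

set_option maxHeartbeats 1000000 in
/-- For `t ≥ 3` and `k ≥ 2t − 3`, `K_k^n` has a `K_t`-saturated subgraph with at most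
`min{(2t−4)kn + (t−2)n² − 2(2t−4)n − C(2t−4,2), (2t−3)kn − (2t−3)n − (2t−3)(t−1)}`
edges, i.e. `sat(K_t, K_k^n)` is at most this quantity. -/
theorem stmt_14 (t k n : ℕ) (ht : 3 ≤ t) (hk : 2 * t - 3 ≤ k) (hn : 2 ≤ n) :
    ∃ J : SimpleGraph (Fin k × Fin n), IsSatIn t J (multipartite k n) ∧
      (J.edgeSet.ncard : ℤ) ≤
        min ((2 * (t : ℤ) - 4) * (k * n) + ((t : ℤ) - 2) * n ^ 2 -
              2 * (2 * (t : ℤ) - 4) * n - ((2 * t - 4).choose 2 : ℤ))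
          ((2 * (t : ℤ) - 3) * (k * n) - (2 * (t : ℤ) - 3) * n -
              (2 * (t : ℤ) - 3) * ((t : ℤ) - 1)) := by
  classical
  obtain ⟨s, rfl⟩ : ∃ s, t = s + 3 := ⟨t - 3, by omega⟩
  have hk3 : 2 * s + 3 ≤ k := by omega
  have hn1 : 1 ≤ n := by omega
  have hch : (((2 * (s + 3) - 4).choose 2 : ℕ) : ℤ) = ((s : ℤ) + 1) * (2 * s + 1) := by
    have h1 : 2 * (s + 3) - 4 = 2 * s + 2 := by omega
    have h0 : 2 * s + 2 - 1 = 2 * s + 1 := by omega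
    rw [h1, Nat.choose_two_right, h0,
      show (2 * s + 2) * (2 * s + 1) = 2 * ((s + 1) * (2 * s + 1)) from by ring,
      Nat.mul_div_cancel_left _ (by norm_num)]
    push_cast
    ring
  by_cases hAB : ((s : ℤ) + 1) * (2 * (k : ℤ) * n + (n : ℤ) ^ 2 - 4 * n - (2 * s + 1)) ≤
      (2 * (s : ℤ) + 3) * ((k : ℤ) * n - n - ((s : ℤ) + 2))
  · -- use construction A
    set JA := Sat14.gen k n (2 * s + 2) (Sat14.mateRel s) (Sat14.RnA s)
      (Sat14.mateRel_symm s) (Sat14.RnA_symm s) with hJA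
    have hkP : 2 * s + 2 ≤ k := by omega
    have hcard : ((JA.edgeSet.ncard : ℤ)) =
        ((s : ℤ) + 1) * (2 * (k : ℤ) * n + (n : ℤ) ^ 2 - 4 * n - (2 * s + 1)) := by
      have hncd : JA.edgeSet.ncard = JA.edgeFinset.card := by
        rw [← SimpleGraph.coe_edgeFinset, Set.ncard_coe_finset]
      have h2e := Sat14.master_count (hR := Sat14.mateRel_symm s) (hRn := Sat14.RnA_symm s)
        hkP hn1 (2 * s) 1 (Sat14.RnA_lt s) (Sat14.RnA_irr s)
        (fun a ha => Sat14.A_gR s a ha) (fun a ha => Sat14.A_cN s a ha)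
      zify [hkP, hn1, show (1 : ℕ) ≤ k by omega, show (1 : ℕ) ≤ 2 * s + 2 by omega] at h2e
      rw [hncd]
      nlinarith [h2e]
    refine ⟨JA, ⟨Sat14.gen_le _ _ _ _ _ _ _,
      Sat14.master_cliqueFree (Sat14.A_C1 s) (Sat14.A_C2 s) (Sat14.A_C3 s),
      Sat14.master_sat hkP hk3 hn (Sat14.A_S1 s) (Sat14.A_S2 s)⟩, ?_⟩
    rw [le_min_iff, hcard]
    constructor
    · rw [hch]
      push_cast
      ring_nf
      exact le_rfl
    · push_cast
      nlinarith [hAB]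
  · -- use construction B
    set JB := Sat14.gen k n (2 * s + 3) (Sat14.cycRel s) Sat14.RnB
      (Sat14.cycRel_symm s) Sat14.RnB_symm with hJB
    have hkP : 2 * s + 3 ≤ k := hk3
    have hcard : ((JB.edgeSet.ncard : ℤ)) =
        (2 * (s : ℤ) + 3) * ((k : ℤ) * n - n - ((s : ℤ) + 2)) := by
      have hncd : JB.edgeSet.ncard = JB.edgeFinset.card := by
        rw [← SimpleGraph.coe_edgeFinset, Set.ncard_coe_finset]
      have h2e := Sat14.master_count (hR := Sat14.cycRel_symm s) (hRn := Sat14.RnB_symm)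
        hkP hn1 (2 * s) 0 (fun i j h => h.elim) (fun i h => h)
        (fun a ha => Sat14.B_gR s a ha) (fun a _ => Sat14.B_cN s a)
      zify [hkP, hn1, show (1 : ℕ) ≤ k by omega, show (1 : ℕ) ≤ 2 * s + 3 by omega] at h2e
      rw [hncd]
      nlinarith [h2e]
    refine ⟨JB, ⟨Sat14.gen_le _ _ _ _ _ _ _,
      Sat14.master_cliqueFree (Sat14.B_C1 s) (fun i j h => h.elim)
        (fun _ _ _ _ _ _ hij _ _ => hij),
      Sat14.master_sat hkP hk3 hn (Sat14.B_S1 s) (fun i j _ _ => Sat14.B_S2 s i j)⟩, ?_⟩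
    rw [le_min_iff, hcard]
    push_neg at hAB
    constructor
    · rw [hch]
      push_cast
      nlinarith [hAB]
    · push_cast
      ring_nf
      exact le_rfl
end

section
/- Let t ≥ 4. For every real ε > 0 there exists N such that for all k ≥ t and all n ≥ 2 with nk ≥ N, sat(K_t, K_k^n) ≤ (3(t−2) + ε)·nk; that is, sat(K_t, K_k^n) ≤ 3(t−2)nk + o(nk). -/
open SimpleGraph

section Construction

variable {t k n : ℕ}

/-- The saturated graph determined by a placement `v` of the `3(t-2)` special vertices:
special vertices are adjacent to everything in other parts, except that two special
vertices are adjacent only when they lie in different layers (and different parts). -/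
def satG (v : Fin (t-2) × Fin 3 → Fin k × Fin n) : SimpleGraph (Fin k × Fin n) where
  Adj x y := x.1 ≠ y.1 ∧
    ((x ∈ Set.range v ∧ y ∉ Set.range v) ∨ (y ∈ Set.range v ∧ x ∉ Set.range v) ∨
      ∃ p q, v p = x ∧ v q = y ∧ p.1 ≠ q.1)
  symm := ⟨by
    rintro x y ⟨h1, h2⟩
    refine ⟨h1.symm, ?_⟩
    rcases h2 with h | h | ⟨p, q, hp, hq, hpq⟩
    · exact Or.inr (Or.inl h)
    · exact Or.inl h
    · exact Or.inr (Or.inr ⟨q, p, hq, hp, hpq.symm⟩)⟩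
  loopless := ⟨fun x h => h.1 rfl⟩

/-- The main construction lemma: any placement `v` of `3(t-2)` special vertices
(`t-2` "layers" of 3 vertices each) satisfying the axioms below yields a
`K_t`-saturated subgraph of `K_k^n` with at most `3(t-2)nk` edges. -/
lemma main_lemma (t k n : ℕ) (ht : 4 ≤ t) (hk : t ≤ k) (hn : 2 ≤ n)
    (v : Fin (t-2) × Fin 3 → Fin k × Fin n) (hv : Function.Injective v)
    (H2 : ∀ i j : Fin k, i ≠ j → ∃ σ : Fin (t-2) → Fin 3,
      (∀ r, (v (r, σ r)).1 ≠ i ∧ (v (r, σ r)).1 ≠ j) ∧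
      (∀ r r', r ≠ r' → (v (r, σ r)).1 ≠ (v (r', σ r')).1))
    (H3 : ∀ q : Fin k, ∃ m : Fin n, (q, m) ∉ Set.range v) :
    ∃ J : SimpleGraph (Fin k × Fin n), IsSatIn t J (multipartite k n) ∧
      J.edgeSet.ncard ≤ 3*(t-2)*(n*k) := by
  classical
  refine ⟨satG v, ⟨?_, ?_, ?_⟩, ?_⟩
  · -- J ≤ G
    intro x y h
    exact h.1
  · -- clique free
    intro C hC
    have hpos : 0 < t - 2 := by omega
    set lay : Fin k × Fin n → Fin (t-2) :=
      fun x => if h : ∃ p, v p = x then h.choose.1 else ⟨0, hpos⟩ with hlaydef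
    have hlay : ∀ p, lay (v p) = p.1 := by
      intro p
      have h : ∃ p', v p' = v p := ⟨p, rfl⟩
      have := hv h.choose_spec
      simp only [hlaydef, dif_pos h, this]
    have hsplit := Finset.card_filter_add_card_filter_not
      (s := C) (p := fun x => x ∈ Set.range v)
    have hA : (C.filter (fun x => x ∈ Set.range v)).card ≤ t - 2 := by
      have : (C.filter (fun x => x ∈ Set.range v)).card
          ≤ (Finset.univ : Finset (Fin (t-2))).card := by
        apply Finset.card_le_card_of_injOn lay (fun _ _ => Finset.mem_univ _)
        intro x hx y hy hxy
        simp only [Finset.mem_coe, Finset.mem_filter] at hx hy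
        obtain ⟨p, hp⟩ := hx.2
        obtain ⟨q, hq⟩ := hy.2
        by_contra hne
        have hadj := hC.1 (Finset.mem_coe.mpr hx.1) (Finset.mem_coe.mpr hy.1) hne
        rcases hadj.2 with h | h | ⟨p', q', hp', hq', hpq⟩
        · exact h.2 ⟨q, hq⟩
        · exact h.2 ⟨p, hp⟩
        · have : p' = p := hv (by rw [hp', hp])
          have hq'' : q' = q := hv (by rw [hq', hq])
          apply hpq
          rw [this, hq'']
          rw [← hp, ← hq, hlay, hlay] at hxy
          exact hxy
      simpa using this
    have hB : (C.filter (fun x => ¬ x ∈ Set.range v)).card ≤ 1 := by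
      apply Finset.card_le_one.mpr
      intro a ha b hb
      simp only [Finset.mem_filter] at ha hb
      by_contra hne
      have hadj := hC.1 (Finset.mem_coe.mpr ha.1) (Finset.mem_coe.mpr hb.1) hne
      rcases hadj.2 with h | h | ⟨p', q', hp', hq', hpq⟩
      · exact ha.2 h.1
      · exact hb.2 h.1
      · exact ha.2 ⟨p', hp'⟩
    have := hC.2
    omega
  · -- saturated
    intro u w hG hnadj
    set J := satG v with hJdef
    set J' := J ⊔ SimpleGraph.fromEdgeSet {s(u, w)} with hJ'def
    have hne1 : u.1 ≠ w.1 := hG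
    have hneuw : u ≠ w := fun h => hne1 (congrArg Prod.fst h)
    have hD : ¬ ((u ∈ Set.range v ∧ w ∉ Set.range v) ∨ (w ∈ Set.range v ∧ u ∉ Set.range v) ∨
        ∃ p q, v p = u ∧ v q = w ∧ p.1 ≠ q.1) := fun d => hnadj ⟨hne1, d⟩
    have lift : ∀ a b, J.Adj a b → J'.Adj a b := fun a b h => Or.inl h
    have huw' : J'.Adj u w := Or.inr ⟨rfl, hneuw⟩
    obtain ⟨σ, hσ1, hσ2⟩ := H2 u.1 w.1 hne1
    have hrepinj : Function.Injective (fun r => v (r, σ r)) := by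
      intro r r' h
      exact congrArg Prod.fst (hv h)
    by_cases hu : u ∈ Set.range v
    · by_cases hw : w ∈ Set.range v
      · -- both endpoints special: they lie in the same layer
        obtain ⟨p, hp⟩ := hu
        obtain ⟨q, hq⟩ := hw
        have hsame : p.1 = q.1 := by
          by_contra hne
          exact hD (Or.inr (Or.inr ⟨p, q, hp, hq, hne⟩))
        set R : Finset (Fin k × Fin n) :=
          (Finset.univ.erase p.1).image (fun r => v (r, σ r)) with hRdef
        have hRcard : R.card = t - 3 := by
          rw [hRdef, Finset.card_image_of_injective _ hrepinj,
            Finset.card_erase_of_mem (Finset.mem_univ _), Finset.card_univ, Fintype.card_fin]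
          omega
        have hmemR : ∀ a, a ∈ R → ∃ r', r' ≠ p.1 ∧ v (r', σ r') = a := by
          intro a haR
          obtain ⟨r', hr', rfl⟩ := Finset.mem_image.mp haR
          exact ⟨r', Finset.ne_of_mem_erase hr', rfl⟩
        have hRrange : ∀ a, a ∈ R → a ∈ Set.range v := by
          intro a haR
          obtain ⟨r', _, rfl⟩ := hmemR a haR
          exact ⟨_, rfl⟩
        set P : Finset (Fin k) := insert u.1 (insert w.1 (R.image Prod.fst)) with hPdef
        have hPcard : P.card ≤ t - 1 := by
          calc P.card ≤ (insert w.1 (R.image Prod.fst)).card + 1 := Finset.card_insert_le _ _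
            _ ≤ ((R.image Prod.fst).card + 1) + 1 := by
                have := Finset.card_insert_le w.1 (R.image Prod.fst); omega
            _ ≤ (R.card + 1) + 1 := by
                have := Finset.card_image_le (s := R) (f := Prod.fst); omega
            _ ≤ t - 1 := by omega
        have hz : ∃ z : Fin k, z ∉ P := by
          by_contra h
          push_neg at h
          have : (Finset.univ : Finset (Fin k)).card ≤ P.card :=
            Finset.card_le_card (fun z _ => h z)
          rw [Finset.card_univ, Fintype.card_fin] at this
          omega
        obtain ⟨z, hz⟩ := hz
        have hzu : z ≠ u.1 := fun h => hz (h ▸ Finset.mem_insert_self _ _)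
        have hzw : z ≠ w.1 := fun h => hz (by
          rw [hPdef]
          exact Finset.mem_insert_of_mem (h ▸ Finset.mem_insert_self _ _))
        have hzR : ∀ a, a ∈ R → z ≠ a.1 := by
          intro a haR h
          apply hz
          rw [hPdef]
          exact Finset.mem_insert_of_mem (Finset.mem_insert_of_mem
            (Finset.mem_image.mpr ⟨a, haR, h.symm⟩))
        obtain ⟨m, hm⟩ := H3 z
        set x : Fin k × Fin n := (z, m) with hxdef
        have hxns : x ∉ Set.range v := hm
        -- adjacency facts
        have hux : J.Adj u x := ⟨fun h => hzu (h.symm), Or.inl ⟨⟨p, hp⟩, hxns⟩⟩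
        have hwx : J.Adj w x := ⟨fun h => hzw (h.symm), Or.inl ⟨⟨q, hq⟩, hxns⟩⟩
        have hurep : ∀ a ∈ R, J.Adj u a := by
          intro a haR
          obtain ⟨r', hr', rfl⟩ := hmemR a haR
          exact ⟨fun h => (hσ1 r').1 h.symm,
            Or.inr (Or.inr ⟨p, (r', σ r'), hp, rfl, fun h => hr' h.symm⟩)⟩
        have hwrep : ∀ a ∈ R, J.Adj w a := by
          intro a haR
          obtain ⟨r', hr', rfl⟩ := hmemR a haR
          refine ⟨fun h => (hσ1 r').2 h.symm, Or.inr (Or.inr ⟨q, (r', σ r'), hq, rfl, ?_⟩)⟩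
          intro h
          exact hr' ((h.symm).trans hsame.symm)
        have hxrep : ∀ a ∈ R, J.Adj x a := by
          intro a haR
          exact ⟨hzR a haR, Or.inr (Or.inl ⟨hRrange a haR, hxns⟩)⟩
        have hreprep : ∀ a ∈ R, ∀ b ∈ R, a ≠ b → J.Adj a b := by
          intro a haR b hbR hab
          obtain ⟨r', _, rfl⟩ := hmemR a haR
          obtain ⟨r'', _, rfl⟩ := hmemR b hbR
          have hne : r' ≠ r'' := fun h => hab (by rw [h])
          exact ⟨hσ2 r' r'' hne, Or.inr (Or.inr ⟨(r', σ r'), (r'', σ r''), rfl, rfl, hne⟩)⟩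
        -- distinctness facts
        have hxu : x ≠ u := fun h => hzu (congrArg Prod.fst h)
        have hxw : x ≠ w := fun h => hzw (congrArg Prod.fst h)
        have hxR : x ∉ R := fun h => hxns (hRrange x h)
        have huR : u ∉ R := by
          intro h
          obtain ⟨r', hr', hre⟩ := hmemR u h
          exact hr' (congrArg Prod.fst (hv (hre.trans hp.symm)))
        have hwR : w ∉ R := by
          intro h
          obtain ⟨r', hr', hre⟩ := hmemR w h
          exact hr' ((congrArg Prod.fst (hv (hre.trans hq.symm))).trans hsame.symm)
        set C : Finset (Fin k × Fin n) := insert u (insert w (insert x R)) with hCdef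
        intro hcf
        refine hcf C ⟨?_, ?_⟩
        · -- C is a clique in J'
          intro a ha b hb hab
          simp only [hCdef, Finset.coe_insert, Set.mem_insert_iff, Finset.mem_coe] at ha hb
          rcases ha with rfl | rfl | rfl | haR <;> rcases hb with rfl | rfl | rfl | hbR
          · exact absurd rfl hab
          · exact huw'
          · exact lift _ _ hux
          · exact lift _ _ (hurep b hbR)
          · exact huw'.symm
          · exact absurd rfl hab
          · exact lift _ _ hwx
          · exact lift _ _ (hwrep b hbR)
          · exact (lift _ _ hux).symm
          · exact (lift _ _ hwx).symm
          · exact absurd rfl hab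
          · exact lift _ _ (hxrep b hbR)
          · exact (lift _ _ (hurep a haR)).symm
          · exact (lift _ _ (hwrep a haR)).symm
          · exact (lift _ _ (hxrep a haR)).symm
          · exact lift _ _ (hreprep a haR b hbR hab)
        · -- C has t elements
          rw [hCdef]
          rw [Finset.card_insert_of_notMem (by
            simp only [Finset.mem_insert]
            push_neg
            exact ⟨hneuw, fun h => hxu h.symm, huR⟩)]
          rw [Finset.card_insert_of_notMem (by
            simp only [Finset.mem_insert]
            push_neg
            exact ⟨fun h => hxw h.symm, hwR⟩)]
          rw [Finset.card_insert_of_notMem hxR, hRcard]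
          omega
      · exact absurd (Or.inl ⟨hu, hw⟩) hD
    · by_cases hw : w ∈ Set.range v
      · exact absurd (Or.inr (Or.inl ⟨hw, hu⟩)) hD
      · -- both endpoints non-special
        set R : Finset (Fin k × Fin n) :=
          Finset.univ.image (fun r => v (r, σ r)) with hRdef
        have hRcard : R.card = t - 2 := by
          rw [hRdef, Finset.card_image_of_injective _ hrepinj, Finset.card_univ,
            Fintype.card_fin]
        have hmemR : ∀ a, a ∈ R → ∃ r', v (r', σ r') = a := by
          intro a haR
          obtain ⟨r', _, rfl⟩ := Finset.mem_image.mp haR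
          exact ⟨r', rfl⟩
        have hRrange : ∀ a, a ∈ R → a ∈ Set.range v := by
          intro a haR
          obtain ⟨r', rfl⟩ := hmemR a haR
          exact ⟨_, rfl⟩
        have hurep : ∀ a ∈ R, J.Adj u a := by
          intro a haR
          obtain ⟨r', rfl⟩ := hmemR a haR
          exact ⟨fun h => (hσ1 r').1 h.symm, Or.inr (Or.inl ⟨⟨_, rfl⟩, hu⟩)⟩
        have hwrep : ∀ a ∈ R, J.Adj w a := by
          intro a haR
          obtain ⟨r', rfl⟩ := hmemR a haR
          exact ⟨fun h => (hσ1 r').2 h.symm, Or.inr (Or.inl ⟨⟨_, rfl⟩, hw⟩)⟩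
        have hreprep : ∀ a ∈ R, ∀ b ∈ R, a ≠ b → J.Adj a b := by
          intro a haR b hbR hab
          obtain ⟨r', rfl⟩ := hmemR a haR
          obtain ⟨r'', rfl⟩ := hmemR b hbR
          have hne : r' ≠ r'' := fun h => hab (by rw [h])
          exact ⟨hσ2 r' r'' hne, Or.inr (Or.inr ⟨(r', σ r'), (r'', σ r''), rfl, rfl, hne⟩)⟩
        have huR : u ∉ R := fun h => hu (hRrange u h)
        have hwR : w ∉ R := fun h => hw (hRrange w h)
        set C : Finset (Fin k × Fin n) := insert u (insert w R) with hCdef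
        intro hcf
        refine hcf C ⟨?_, ?_⟩
        · intro a ha b hb hab
          simp only [hCdef, Finset.coe_insert, Set.mem_insert_iff, Finset.mem_coe] at ha hb
          rcases ha with rfl | rfl | haR <;> rcases hb with rfl | rfl | hbR
          · exact absurd rfl hab
          · exact huw'
          · exact lift _ _ (hurep b hbR)
          · exact huw'.symm
          · exact absurd rfl hab
          · exact lift _ _ (hwrep b hbR)
          · exact (lift _ _ (hurep a haR)).symm
          · exact (lift _ _ (hwrep a haR)).symm
          · exact lift _ _ (hreprep a haR b hbR hab)
        · rw [hCdef]
          rw [Finset.card_insert_of_notMem (by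
            simp only [Finset.mem_insert]
            push_neg
            exact ⟨hneuw, huR⟩)]
          rw [Finset.card_insert_of_notMem hwR, hRcard]
          omega
  · -- edge count
    set J := satG v with hJ
    letI : DecidableRel J.Adj := Classical.decRel _
    have hcoe : J.edgeSet = ↑J.edgeFinset := (coe_edgeFinset J).symm
    rw [hcoe, Set.ncard_coe_finset]
    have hsub : J.edgeFinset ⊆
        (Finset.univ : Finset (Fin (t-2) × Fin 3)).biUnion (fun p => J.incidenceFinset (v p)) := by
      intro e he
      rw [mem_edgeFinset] at he
      induction e with
      | _ a b =>
        have hadj : J.Adj a b := he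
        have : (∃ p, v p = a) ∨ (∃ p, v p = b) := by
          rcases hadj.2 with h | h | ⟨p, q, hp, hq, _⟩
          · exact Or.inl h.1
          · exact Or.inr h.1
          · exact Or.inl ⟨p, hp⟩
        rcases this with ⟨p, hp⟩ | ⟨p, hp⟩
        · refine Finset.mem_biUnion.mpr ⟨p, Finset.mem_univ _, ?_⟩
          rw [mem_incidenceFinset, hp]
          exact J.mk'_mem_incidenceSet_left_iff.mpr hadj
        · refine Finset.mem_biUnion.mpr ⟨p, Finset.mem_univ _, ?_⟩
          rw [mem_incidenceFinset, hp]
          exact J.mk'_mem_incidenceSet_right_iff.mpr hadj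
    calc J.edgeFinset.card ≤ _ := Finset.card_le_card hsub
      _ ≤ ∑ p : Fin (t-2) × Fin 3, (J.incidenceFinset (v p)).card := Finset.card_biUnion_le
      _ ≤ ∑ _p : Fin (t-2) × Fin 3, n*k := by
          apply Finset.sum_le_sum
          intro p _
          rw [card_incidenceFinset_eq_degree]
          have := J.degree_lt_card_verts (v p)
          rw [Fintype.card_prod, Fintype.card_fin, Fintype.card_fin] at this
          have hnk : k*n = n*k := Nat.mul_comm k n
          omega
      _ = 3*(t-2)*(n*k) := by
          rw [Finset.sum_const, Finset.card_univ, Fintype.card_prod, Fintype.card_fin,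
            Fintype.card_fin]
          ring

/-- Placement when `n ≥ t`: layer `r` has vertices in parts `r`, `t-2`, `t-1`. -/
def vA (t k n : ℕ) (h4 : 4 ≤ t) (hk : t ≤ k) (hn : t ≤ n)
    (p : Fin (t-2) × Fin 3) : Fin k × Fin n :=
  (⟨if p.2.val = 0 then p.1.val else if p.2.val = 1 then t-2 else t-1,
      by have := p.1.isLt; split_ifs <;> omega⟩,
   ⟨if p.2.val = 0 then 0 else p.1.val,
      by have := p.1.isLt; split_ifs <;> omega⟩)

lemma vA_inj (t k n : ℕ) (h4 : 4 ≤ t) (hk : t ≤ k) (hn : t ≤ n) :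
    Function.Injective (vA t k n h4 hk hn) := by
  intro p q h
  simp only [vA, Prod.mk.injEq, Fin.mk.injEq] at h
  obtain ⟨h1, h2⟩ := h
  have hp1 := p.1.isLt
  have hq1 := q.1.isLt
  have hp2 := p.2.isLt
  have hq2 := q.2.isLt
  have : p.1.val = q.1.val ∧ p.2.val = q.2.val := by
    split_ifs at h1 h2 <;> omega
  exact Prod.ext (Fin.ext this.1) (Fin.ext this.2)

lemma vA_H3 (t k n : ℕ) (h4 : 4 ≤ t) (hk : t ≤ k) (hn : t ≤ n) :
    ∀ q : Fin k, ∃ m : Fin n, (q, m) ∉ Set.range (vA t k n h4 hk hn) := by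
  intro q
  refine ⟨⟨if q.val < t-2 then 1 else t-2, by split_ifs <;> omega⟩, ?_⟩
  rintro ⟨p, hp⟩
  have hp1 := p.1.isLt
  simp only [vA, Prod.mk.injEq, Fin.mk.injEq, Fin.ext_iff] at hp
  obtain ⟨h1, h2⟩ := hp
  split_ifs at h1 h2 <;> omega

set_option maxHeartbeats 3200000 in
lemma vA_H2 (t k n : ℕ) (h4 : 4 ≤ t) (hk : t ≤ k) (hn : t ≤ n) :
    ∀ i j : Fin k, i ≠ j → ∃ σ : Fin (t-2) → Fin 3,
      (∀ r, ((vA t k n h4 hk hn) (r, σ r)).1 ≠ i ∧ ((vA t k n h4 hk hn) (r, σ r)).1 ≠ j) ∧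
      (∀ r r', r ≠ r' →
        ((vA t k n h4 hk hn) (r, σ r)).1 ≠ ((vA t k n h4 hk hn) (r', σ r')).1) := by
  intro i j hij
  have hij' : i.val ≠ j.val := fun h => hij (Fin.ext h)
  refine ⟨fun r => ⟨if r.val = i.val then (if t-2 = j.val then 2 else 1)
    else if r.val = j.val then (if t-1 = i.val then 1 else 2) else 0,
    by split_ifs <;> omega⟩, ?_, ?_⟩
  · intro r
    have hr := r.isLt
    constructor <;>
    · simp only [vA, Ne, Fin.ext_iff, Fin.val_mk]
      split_ifs <;> first | contradiction | omega
  · intro r r' hne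
    have hr := r.isLt
    have hr' := r'.isLt
    have hne' : r.val ≠ r'.val := fun h => hne (Fin.ext h)
    simp only [vA, Ne, Fin.ext_iff, Fin.val_mk]
    split_ifs <;> first | contradiction | omega

/-- Placement when `k ≥ 3(t-2)`: layer `r` has vertices in parts `3r, 3r+1, 3r+2`. -/
def vB (t k n : ℕ) (h4 : 4 ≤ t) (hk : 3*(t-2) ≤ k) (hn : 2 ≤ n)
    (p : Fin (t-2) × Fin 3) : Fin k × Fin n :=
  (⟨3*p.1.val + p.2.val, by have := p.1.isLt; have := p.2.isLt; omega⟩, ⟨0, by omega⟩)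

lemma vB_inj (t k n : ℕ) (h4 : 4 ≤ t) (hk : 3*(t-2) ≤ k) (hn : 2 ≤ n) :
    Function.Injective (vB t k n h4 hk hn) := by
  intro p q h
  simp only [vB, Prod.mk.injEq, Fin.mk.injEq] at h
  have hp2 := p.2.isLt
  have hq2 := q.2.isLt
  exact Prod.ext (Fin.ext (by omega)) (Fin.ext (by omega))

lemma vB_H3 (t k n : ℕ) (h4 : 4 ≤ t) (hk : 3*(t-2) ≤ k) (hn : 2 ≤ n) :
    ∀ q : Fin k, ∃ m : Fin n, (q, m) ∉ Set.range (vB t k n h4 hk hn) := by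
  intro q
  refine ⟨⟨1, by omega⟩, ?_⟩
  rintro ⟨p, hp⟩
  simp only [vB, Prod.mk.injEq, Fin.mk.injEq, Fin.ext_iff] at hp
  omega

set_option maxHeartbeats 1600000 in
lemma vB_H2 (t k n : ℕ) (h4 : 4 ≤ t) (hk : 3*(t-2) ≤ k) (hn : 2 ≤ n) :
    ∀ i j : Fin k, i ≠ j → ∃ σ : Fin (t-2) → Fin 3,
      (∀ r, ((vB t k n h4 hk hn) (r, σ r)).1 ≠ i ∧ ((vB t k n h4 hk hn) (r, σ r)).1 ≠ j) ∧
      (∀ r r', r ≠ r' →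
        ((vB t k n h4 hk hn) (r, σ r)).1 ≠ ((vB t k n h4 hk hn) (r', σ r')).1) := by
  intro i j hij
  have hij' : i.val ≠ j.val := fun h => hij (Fin.ext h)
  refine ⟨fun r => ⟨if 3*r.val = i.val ∨ 3*r.val = j.val then
      (if 3*r.val+1 = i.val ∨ 3*r.val+1 = j.val then 2 else 1) else 0,
    by split_ifs <;> omega⟩, ?_, ?_⟩
  · intro r
    have hr := r.isLt
    constructor <;>
    · simp only [vB, Ne, Fin.ext_iff, Fin.val_mk]
      split_ifs <;> first | contradiction | omega
  · intro r r' hne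
    have hr := r.isLt
    have hr' := r'.isLt
    have hne' : r.val ≠ r'.val := fun h => hne (Fin.ext h)
    simp only [vB, Ne, Fin.ext_iff, Fin.val_mk]
    split_ifs <;> first | contradiction | omega

end Construction

/-- For `t ≥ 4` and `k ≥ t`, `sat(K_t, K_k^n) ≤ 3(t−2)nk + o(nk)`: for every `ε > 0`
there is `N` such that whenever `nk ≥ N`, some `K_t`-saturated subgraph of `K_k^n`
has at most `(3(t−2) + ε)·nk` edges. -/
theorem stmt_15 (t : ℕ) (ht : 4 ≤ t) :
    ∀ ε : ℝ, 0 < ε → ∃ N : ℕ, ∀ k n : ℕ, t ≤ k → 2 ≤ n → N ≤ n * k →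
      ∃ J : SimpleGraph (Fin k × Fin n), IsSatIn t J (multipartite k n) ∧
        (J.edgeSet.ncard : ℝ) ≤ (3 * ((t : ℝ) - 2) + ε) * (n * k) := by
  intro ε hε
  refine ⟨3*t*t, ?_⟩
  intro k n hk hn hN
  have key : ∃ J : SimpleGraph (Fin k × Fin n), IsSatIn t J (multipartite k n) ∧
      J.edgeSet.ncard ≤ 3*(t-2)*(n*k) := by
    by_cases hnt : t ≤ n
    · exact main_lemma t k n ht hk hn (vA t k n ht hk hnt) (vA_inj t k n ht hk hnt)
        (vA_H2 t k n ht hk hnt) (vA_H3 t k n ht hk hnt)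
    · -- here n < t, so k must be large
      push_neg at hnt
      have hk3 : 3*(t-2) ≤ k := by
        by_contra hlt
        push_neg at hlt
        have h1 : n * k ≤ (t-1) * (3*(t-2) - 1) :=
          Nat.mul_le_mul (by omega) (by omega)
        obtain ⟨s, rfl⟩ : ∃ s, t = s + 4 := ⟨t - 4, by omega⟩
        have e1 : s + 4 - 1 = s + 3 := by omega
        have e2 : 3*(s + 4 - 2) - 1 = 3*s + 5 := by omega
        rw [e1, e2] at h1
        nlinarith [hN, h1]
      exact main_lemma t k n ht hk hn (vB t k n ht hk3 hn) (vB_inj t k n ht hk3 hn)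
        (vB_H2 t k n ht hk3 hn) (vB_H3 t k n ht hk3 hn)
  obtain ⟨J, hsat, hcard⟩ := key
  refine ⟨J, hsat, ?_⟩
  have hcast : ((3*(t-2)*(n*k) : ℕ) : ℝ) = 3*((t:ℝ)-2)*((n:ℝ)*(k:ℝ)) := by
    push_cast [Nat.cast_sub (by omega : 2 ≤ t)]
    ring
  calc (J.edgeSet.ncard : ℝ) ≤ ((3*(t-2)*(n*k) : ℕ) : ℝ) := Nat.cast_le.mpr hcard
    _ = 3*((t:ℝ)-2)*((n:ℝ)*(k:ℝ)) := hcast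
    _ ≤ (3 * ((t : ℝ) - 2) + ε) * (n * k) := by
        apply mul_le_mul_of_nonneg_right (by linarith) (by positivity)
end

section
/- Let t ≥ 6 be even. For every real ε > 0 there exists N such that for all k ≥ 3(t−2) and all n ≥ 2 with nk ≥ N, sat(K_t, K_k^n) ≤ ((t^2 + t − 6)/2 + ε)·nk; that is, sat(K_t, K_k^n) ≤ (1/2)(t^2 + t − 6)nk + o(nk). -/
open SimpleGraph

namespace Stmt16Aux

def sp (m : ℕ) {k n : ℕ} (v : Fin k × Fin n) : Prop :=
  (v.1 : ℕ) < 3 * m ∧ (v.2 : ℕ) = 0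

instance (m : ℕ) {k n : ℕ} (v : Fin k × Fin n) : Decidable (sp m v) := by
  unfold sp; infer_instance

def JJ (m k n : ℕ) : SimpleGraph (Fin k × Fin n) where
  Adj u w := (u.1 : ℕ) ≠ (w.1 : ℕ) ∧
    ((sp m u ∧ sp m w ∧ (u.1 : ℕ) % m ≠ (w.1 : ℕ) % m) ∨
     (sp m u ∧ ¬ sp m w) ∨ (¬ sp m u ∧ sp m w))
  symm := by
    constructor
    rintro u w ⟨h1, h2⟩
    exact ⟨h1.symm, by tauto⟩
  loopless := by constructor; rintro u ⟨h1, -⟩; exact h1 rfl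

lemma JJ_cliqueFree (m k n : ℕ) (hm : 0 < m) : (JJ m k n).CliqueFree (m + 2) := by
  intro s hs
  obtain ⟨hclique, hcard⟩ := hs
  have hadj : ∀ a ∈ s, ∀ b ∈ s, a ≠ b → (JJ m k n).Adj a b := fun a ha b hb hab =>
    hclique (Finset.mem_coe.mpr ha) (Finset.mem_coe.mpr hb) hab
  have h1 : (s.filter (fun v => ¬ sp m v)).card ≤ 1 := by
    apply Finset.card_le_one.mpr
    intro a ha b hb
    by_contra hab
    obtain ⟨ha1, ha2⟩ := Finset.mem_filter.mp ha
    obtain ⟨hb1, hb2⟩ := Finset.mem_filter.mp hb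
    rcases (hadj a ha1 b hb1 hab).2 with ⟨h, _⟩ | ⟨h, _⟩ | ⟨_, h⟩ <;> tauto
  have h2 : (s.filter (fun v => sp m v)).card ≤ m := by
    have : (s.filter (fun v => sp m v)).card ≤ (Finset.range m).card := by
      apply Finset.card_le_card_of_injOn (fun v => (v.1 : ℕ) % m)
      · intro v _; exact Finset.mem_range.mpr (Nat.mod_lt _ hm)
      · intro a ha b hb heq
        by_contra hab
        obtain ⟨ha1, ha2⟩ := Finset.mem_filter.mp (Finset.mem_coe.mp ha)
        obtain ⟨hb1, hb2⟩ := Finset.mem_filter.mp (Finset.mem_coe.mp hb)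
        rcases (hadj a ha1 b hb1 hab).2 with ⟨_, _, h⟩ | ⟨_, h⟩ | ⟨h, _⟩ <;> tauto
    simpa using this
  have h3 := Finset.card_filter_add_card_filter_not (s := s) (p := fun v => sp m v)
  omega

lemma edge_bound (m k n : ℕ) : (JJ m k n).edgeSet.ncard ≤ 3 * m * (k * n) := by
  classical
  set Sfin : Finset (Fin k × Fin n) := Finset.univ.filter (fun v => sp m v) with hSfin
  set B : Finset (Sym2 (Fin k × Fin n)) :=
    Sfin.biUnion (fun v => Finset.univ.image (fun w => s(v, w))) with hB
  have hsub : (JJ m k n).edgeSet ⊆ ↑B := by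
    intro e he
    induction e using Sym2.ind with
    | _ a b =>
      rw [SimpleGraph.mem_edgeSet] at he
      have hsp : sp m a ∨ sp m b := by
        rcases he.2 with ⟨h, _⟩ | ⟨h, _⟩ | ⟨_, h⟩
        · exact Or.inl h
        · exact Or.inl h
        · exact Or.inr h
      rcases hsp with h | h
      · refine Finset.mem_coe.mpr (Finset.mem_biUnion.mpr ⟨a, ?_, ?_⟩)
        · exact Finset.mem_filter.mpr ⟨Finset.mem_univ _, h⟩
        · exact Finset.mem_image.mpr ⟨b, Finset.mem_univ _, rfl⟩
      · refine Finset.mem_coe.mpr (Finset.mem_biUnion.mpr ⟨b, ?_, ?_⟩)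
        · exact Finset.mem_filter.mpr ⟨Finset.mem_univ _, h⟩
        · exact Finset.mem_image.mpr ⟨a, Finset.mem_univ _, Sym2.eq_swap⟩
  have h1 : (JJ m k n).edgeSet.ncard ≤ B.card := by
    have := Set.ncard_le_ncard hsub B.finite_toSet
    rwa [Set.ncard_coe_finset] at this
  have hS : Sfin.card ≤ 3 * m := by
    have : Sfin.card ≤ (Finset.range (3 * m)).card := by
      apply Finset.card_le_card_of_injOn (fun v => (v.1 : ℕ))
      · intro v hv
        exact Finset.mem_range.mpr (Finset.mem_filter.mp hv).2.1
      · intro a ha b hb heq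
        have ha2 := (Finset.mem_filter.mp (Finset.mem_coe.mp ha)).2.2
        have hb2 := (Finset.mem_filter.mp (Finset.mem_coe.mp hb)).2.2
        exact Prod.ext (Fin.ext heq) (Fin.ext (ha2.trans hb2.symm))
    simpa using this
  have h2 : B.card ≤ Sfin.card * (k * n) := by
    refine (Finset.card_biUnion_le).trans ?_
    have : ∀ v ∈ Sfin, (Finset.univ.image (fun w => s(v, w))).card ≤ k * n := by
      intro v _
      refine (Finset.card_image_le).trans ?_
      simp [Finset.card_univ]
    calc ∑ v ∈ Sfin, (Finset.univ.image (fun w => s(v, w))).card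
        ≤ ∑ _v ∈ Sfin, (k * n) := Finset.sum_le_sum this
      _ = Sfin.card * (k * n) := by rw [Finset.sum_const, smul_eq_mul]
  calc (JJ m k n).edgeSet.ncard ≤ B.card := h1
    _ ≤ Sfin.card * (k * n) := h2
    _ ≤ 3 * m * (k * n) := Nat.mul_le_mul_right _ hS

lemma JJ_sat (m k n : ℕ) (hm : 0 < m) (hk : 3 * m ≤ k) (hn : 2 ≤ n) :
    ∀ u w : Fin k × Fin n, (multipartite k n).Adj u w → ¬ (JJ m k n).Adj u w →
      ¬ ((JJ m k n) ⊔ SimpleGraph.fromEdgeSet {s(u, w)}).CliqueFree (m + 2) := by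
  intro u w huw hnadj
  have hk0 : 0 < k := by omega
  have hn0 : 0 < n := by omega
  have huw' : u.1 ≠ w.1 := huw
  have hUW : (u.1 : ℕ) ≠ (w.1 : ℕ) := fun h => huw' (Fin.ext h)
  have hne_uw : u ≠ w := fun h => huw' (congrArg Prod.fst h)
  set J' := (JJ m k n) ⊔ SimpleGraph.fromEdgeSet {s(u, w)} with hJ'
  have hadjuw : J'.Adj u w := by
    rw [hJ', SimpleGraph.sup_adj, SimpleGraph.fromEdgeSet_adj]
    exact Or.inr ⟨rfl, hne_uw⟩
  have lift : ∀ {x y : Fin k × Fin n}, (JJ m k n).Adj x y → J'.Adj x y :=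
    fun h => (SimpleGraph.sup_adj _ _ _ _).mpr (Or.inl h)
  set U : ℕ := (u.1 : ℕ) with hU
  set W : ℕ := (w.1 : ℕ) with hW
  set pick : ℕ → ℕ := fun i => if i ≠ U ∧ i ≠ W then i else
    if m + i ≠ U ∧ m + i ≠ W then m + i else 2 * m + i with hpick
  have pick_spec : ∀ i, i < m →
      pick i < 3 * m ∧ pick i % m = i ∧ pick i ≠ U ∧ pick i ≠ W := by
    intro i hi
    simp only [hpick]
    split_ifs with h1 h2
    · exact ⟨by omega, Nat.mod_eq_of_lt hi, h1.1, h1.2⟩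
    · exact ⟨by omega, by rw [Nat.add_mod_left, Nat.mod_eq_of_lt hi], h2.1, h2.2⟩
    · refine ⟨by omega, ?_, by omega, by omega⟩
      rw [show 2 * m + i = m + (m + i) by ring, Nat.add_mod_left, Nat.add_mod_left,
        Nat.mod_eq_of_lt hi]
  set g : ℕ → Fin k × Fin n := fun p => (⟨p % k, Nat.mod_lt _ hk0⟩, ⟨0, hn0⟩) with hg
  have hgval : ∀ p, p < k → ((g p).1 : ℕ) = p := fun p hp => Nat.mod_eq_of_lt hp
  have hgsp : ∀ p, p < 3 * m → sp m (g p) := fun p hp =>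
    ⟨by rw [hgval p (lt_of_lt_of_le hp hk)]; exact hp, rfl⟩
  intro hcf
  by_cases hsu : sp m u <;> by_cases hsw : sp m w
  · -- both special, same residue
    have hres : U % m = W % m := by
      by_contra h; exact hnadj ⟨hUW, Or.inl ⟨hsu, hsw, h⟩⟩
    set i₀ : ℕ := U % m with hi₀def
    have hi₀ : i₀ < m := Nat.mod_lt _ hm
    obtain ⟨hr1, hr2, hr3, hr4⟩ := pick_spec i₀ hi₀
    set v : Fin k × Fin n := (⟨pick i₀ % k, Nat.mod_lt _ hk0⟩, ⟨1, by omega⟩) with hv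
    have hvval : (v.1 : ℕ) = pick i₀ := Nat.mod_eq_of_lt (lt_of_lt_of_le hr1 hk)
    have hvnsp : ¬ sp m v := fun h => Nat.one_ne_zero h.2
    set C' : Finset (Fin k × Fin n) := ((Finset.range m).erase i₀).image g with hC'
    have memC' : ∀ x ∈ C', ∃ j, j < m ∧ j ≠ i₀ ∧ x = g j := by
      intro x hx
      obtain ⟨j, hj, rfl⟩ := Finset.mem_image.mp hx
      obtain ⟨hj1, hj2⟩ := Finset.mem_erase.mp hj
      exact ⟨j, Finset.mem_range.mp hj2, hj1, rfl⟩
    have hjval : ∀ j, j < m → ((g j).1 : ℕ) = j := fun j hj =>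
      hgval j (by omega)
    have hjsp : ∀ j, j < m → sp m (g j) := fun j hj => hgsp j (by omega)
    have hA_uv : (JJ m k n).Adj u v := by
      refine ⟨by rw [hvval]; exact fun e => hr3 e.symm, Or.inr (Or.inl ⟨hsu, hvnsp⟩)⟩
    have hA_wv : (JJ m k n).Adj w v := by
      refine ⟨by rw [hvval]; exact fun e => hr4 e.symm, Or.inr (Or.inl ⟨hsw, hvnsp⟩)⟩
    have hA_uj : ∀ j, j < m → j ≠ i₀ → (JJ m k n).Adj u (g j) := by
      intro j hj hji
      refine ⟨?_, Or.inl ⟨hsu, hjsp j hj, ?_⟩⟩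
      · rw [hjval j hj]; intro e
        exact hji (by rw [← Nat.mod_eq_of_lt hj, ← e, ← hi₀def])
      · rw [hjval j hj, Nat.mod_eq_of_lt hj, ← hi₀def]; exact fun e => hji e.symm
    have hA_wj : ∀ j, j < m → j ≠ i₀ → (JJ m k n).Adj w (g j) := by
      intro j hj hji
      have hWres : W % m = i₀ := hres.symm
      refine ⟨?_, Or.inl ⟨hsw, hjsp j hj, ?_⟩⟩
      · rw [hjval j hj]; intro e
        exact hji (by rw [← Nat.mod_eq_of_lt hj, ← e, hWres])
      · rw [hjval j hj, Nat.mod_eq_of_lt hj, hWres]; exact fun e => hji e.symm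
    have hA_vj : ∀ j, j < m → j ≠ i₀ → (JJ m k n).Adj v (g j) := by
      intro j hj hji
      refine ⟨?_, Or.inr (Or.inr ⟨hvnsp, hjsp j hj⟩)⟩
      rw [hvval, hjval j hj]; intro e
      exact hji (by rw [← Nat.mod_eq_of_lt hj, ← e, hr2])
    have hA_jj : ∀ i j, i < m → j < m → i ≠ j → (JJ m k n).Adj (g i) (g j) := by
      intro i j hi hj hij
      refine ⟨by rw [hjval i hi, hjval j hj]; exact hij,
        Or.inl ⟨hjsp i hi, hjsp j hj, ?_⟩⟩
      rw [hjval i hi, hjval j hj, Nat.mod_eq_of_lt hi, Nat.mod_eq_of_lt hj]; exact hij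
    have huv : u ≠ v := fun e => hvnsp (e ▸ hsu)
    have hwv : w ≠ v := fun e => hvnsp (e ▸ hsw)
    have huC : u ∉ C' := by
      intro hx
      obtain ⟨j, hj, hji, he⟩ := memC' u hx
      have hUj : U = j := by
        have h2 : U = ((g j).1 : ℕ) := congrArg (fun x => ((x.1 : Fin k) : ℕ)) he
        rwa [hjval j hj] at h2
      exact hji (by rw [← Nat.mod_eq_of_lt hj, ← hUj]; try exact hi₀def.symm)
    have hwC : w ∉ C' := by
      intro hx
      obtain ⟨j, hj, hji, he⟩ := memC' w hx
      have hWj : W = j := by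
        have h2 : W = ((g j).1 : ℕ) := congrArg (fun x => ((x.1 : Fin k) : ℕ)) he
        rwa [hjval j hj] at h2
      exact hji (by rw [← Nat.mod_eq_of_lt hj, ← hWj, hi₀def]; exact hres.symm)
    have hvC : v ∉ C' := by
      intro hx
      obtain ⟨j, hj, hji, he⟩ := memC' v hx
      exact Nat.one_ne_zero (congrArg (fun x => ((x.2 : Fin n) : ℕ)) he)
    have hC'card : C'.card = m - 1 := by
      rw [hC', Finset.card_image_of_injOn, Finset.card_erase_of_mem (Finset.mem_range.mpr hi₀),
        Finset.card_range]
      intro a ha b hb he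
      have ha' : a < m := Finset.mem_range.mp (Finset.mem_erase.mp ha).2
      have hb' : b < m := Finset.mem_range.mp (Finset.mem_erase.mp hb).2
      have h2 : a % k = b % k := congrArg (fun x => ((x.1 : Fin k) : ℕ)) he
      rwa [Nat.mod_eq_of_lt (by omega), Nat.mod_eq_of_lt (by omega)] at h2
    refine hcf (insert u (insert w (insert v C'))) ⟨?_, ?_⟩
    · intro a ha b hb hab
      simp only [Finset.coe_insert, Set.mem_insert_iff, Finset.mem_coe] at ha hb
      rcases ha with rfl | rfl | rfl | ha <;> rcases hb with rfl | rfl | rfl | hb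
      · exact absurd rfl hab
      · exact hadjuw
      · exact lift hA_uv
      · obtain ⟨j, hj, hji, rfl⟩ := memC' _ hb; exact lift (hA_uj j hj hji)
      · exact hadjuw.symm
      · exact absurd rfl hab
      · exact lift hA_wv
      · obtain ⟨j, hj, hji, rfl⟩ := memC' _ hb; exact lift (hA_wj j hj hji)
      · exact (lift hA_uv).symm
      · exact (lift hA_wv).symm
      · exact absurd rfl hab
      · obtain ⟨j, hj, hji, rfl⟩ := memC' _ hb; exact lift (hA_vj j hj hji)
      · obtain ⟨j, hj, hji, rfl⟩ := memC' _ ha; exact (lift (hA_uj j hj hji)).symm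
      · obtain ⟨j, hj, hji, rfl⟩ := memC' _ ha; exact (lift (hA_wj j hj hji)).symm
      · obtain ⟨j, hj, hji, rfl⟩ := memC' _ ha; exact (lift (hA_vj j hj hji)).symm
      · obtain ⟨i, hi, hii, rfl⟩ := memC' _ ha
        obtain ⟨j, hj, hji, rfl⟩ := memC' _ hb
        have hij : i ≠ j := fun e => hab (by rw [e])
        exact lift (hA_jj i j hi hj hij)
    · have h2 : w ∉ insert v C' := by
        intro h
        rcases Finset.mem_insert.mp h with h | h
        exacts [hwv h, hwC h]
      have h1 : u ∉ insert w (insert v C') := by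
        intro h
        rcases Finset.mem_insert.mp h with h | h
        · exact hne_uw h
        rcases Finset.mem_insert.mp h with h | h
        exacts [huv h, huC h]
      rw [Finset.card_insert_of_notMem h1, Finset.card_insert_of_notMem h2,
        Finset.card_insert_of_notMem hvC, hC'card]
      omega
  · exact absurd ⟨hUW, Or.inr (Or.inl ⟨hsu, hsw⟩)⟩ hnadj
  · exact absurd ⟨hUW, Or.inr (Or.inr ⟨hsu, hsw⟩)⟩ hnadj
  · -- both nonspecial
    set C : Finset (Fin k × Fin n) := (Finset.range m).image (fun i => g (pick i)) with hC
    have hval : ∀ i, i < m → ((g (pick i)).1 : ℕ) = pick i := fun i hi =>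
      hgval _ (lt_of_lt_of_le (pick_spec i hi).1 hk)
    have memC : ∀ x ∈ C, ∃ i, i < m ∧ x = g (pick i) := by
      intro x hx
      obtain ⟨i, hi, rfl⟩ := Finset.mem_image.mp hx
      exact ⟨i, Finset.mem_range.mp hi, rfl⟩
    have hAu : ∀ i, i < m → (JJ m k n).Adj u (g (pick i)) := by
      intro i hi
      obtain ⟨hp1, hp2, hp3, hp4⟩ := pick_spec i hi
      exact ⟨by rw [hval i hi]; exact fun e => hp3 e.symm, Or.inr (Or.inr ⟨hsu, hgsp _ hp1⟩)⟩
    have hAw : ∀ i, i < m → (JJ m k n).Adj w (g (pick i)) := by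
      intro i hi
      obtain ⟨hp1, hp2, hp3, hp4⟩ := pick_spec i hi
      exact ⟨by rw [hval i hi]; exact fun e => hp4 e.symm, Or.inr (Or.inr ⟨hsw, hgsp _ hp1⟩)⟩
    have hAC : ∀ i j, i < m → j < m → i ≠ j → (JJ m k n).Adj (g (pick i)) (g (pick j)) := by
      intro i j hi hj hij
      have hmi := (pick_spec i hi).2.1
      have hmj := (pick_spec j hj).2.1
      refine ⟨?_, Or.inl ⟨hgsp _ (pick_spec i hi).1, hgsp _ (pick_spec j hj).1, ?_⟩⟩
      · rw [hval i hi, hval j hj]; intro e; exact hij (by rw [← hmi, ← hmj, e])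
      · rw [hval i hi, hval j hj, hmi, hmj]; exact hij
    have huC : u ∉ C := by
      intro hx
      obtain ⟨i, hi, he⟩ := memC u hx
      exact hsu (he ▸ hgsp _ (pick_spec i hi).1)
    have hwC : w ∉ C := by
      intro hx
      obtain ⟨i, hi, he⟩ := memC w hx
      exact hsw (he ▸ hgsp _ (pick_spec i hi).1)
    have hCcard : C.card = m := by
      rw [hC, Finset.card_image_of_injOn, Finset.card_range]
      intro i hi j hj he
      have hi' := Finset.mem_range.mp hi
      have hj' := Finset.mem_range.mp hj
      have hpij : pick i = pick j := by
        have h2 : pick i % k = pick j % k := congrArg (fun x => ((x.1 : Fin k) : ℕ)) he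
        rwa [Nat.mod_eq_of_lt (lt_of_lt_of_le (pick_spec i hi').1 hk),
          Nat.mod_eq_of_lt (lt_of_lt_of_le (pick_spec j hj').1 hk)] at h2
      rw [← (pick_spec i hi').2.1, ← (pick_spec j hj').2.1, hpij]
    refine hcf (insert u (insert w C)) ⟨?_, ?_⟩
    · intro a ha b hb hab
      simp only [Finset.coe_insert, Set.mem_insert_iff, Finset.mem_coe] at ha hb
      rcases ha with rfl | rfl | ha <;> rcases hb with rfl | rfl | hb
      · exact absurd rfl hab
      · exact hadjuw
      · obtain ⟨i, hi, rfl⟩ := memC _ hb; exact lift (hAu i hi)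
      · exact hadjuw.symm
      · exact absurd rfl hab
      · obtain ⟨i, hi, rfl⟩ := memC _ hb; exact lift (hAw i hi)
      · obtain ⟨i, hi, rfl⟩ := memC _ ha; exact (lift (hAu i hi)).symm
      · obtain ⟨i, hi, rfl⟩ := memC _ ha; exact (lift (hAw i hi)).symm
      · obtain ⟨i, hi, rfl⟩ := memC _ ha
        obtain ⟨j, hj, rfl⟩ := memC _ hb
        have hij : i ≠ j := fun e => hab (by rw [e])
        exact lift (hAC i j hi hj hij)
    · have h1 : u ∉ insert w C := by
        intro h
        rcases Finset.mem_insert.mp h with h | h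
        exacts [hne_uw h, huC h]
      rw [Finset.card_insert_of_notMem h1, Finset.card_insert_of_notMem hwC, hCcard]

end Stmt16Aux

open Stmt16Aux in
/-- For even `t ≥ 6` and `k ≥ 3(t−2)`, `sat(K_t, K_k^n) ≤ ½(t² + t − 6)nk + o(nk)`:
for every `ε > 0` there is `N` such that whenever `nk ≥ N`, some `K_t`-saturated
subgraph of `K_k^n` has at most `((t² + t − 6)/2 + ε)·nk` edges. -/
theorem stmt_16 (t : ℕ) (ht : 6 ≤ t) (heven : Even t) :
    ∀ ε : ℝ, 0 < ε → ∃ N : ℕ, ∀ k n : ℕ, 3 * (t - 2) ≤ k → 2 ≤ n → N ≤ n * k →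
      ∃ J : SimpleGraph (Fin k × Fin n), IsSatIn t J (multipartite k n) ∧
        (J.edgeSet.ncard : ℝ) ≤ (((t : ℝ) ^ 2 + t - 6) / 2 + ε) * (n * k) := by
  intro ε hε
  refine ⟨0, ?_⟩
  intro k n hk hn _
  set m : ℕ := t - 2 with hm
  have hm4 : 4 ≤ m := by omega
  have ht' : t = m + 2 := by omega
  refine ⟨JJ m k n, ⟨?_, ?_, ?_⟩, ?_⟩
  · intro a b hab
    exact fun e => hab.1 (congrArg Fin.val e)
  · rw [ht']
    exact JJ_cliqueFree m k n (by omega)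
  · rw [ht']
    exact JJ_sat m k n (by omega) hk hn
  · have hE := edge_bound m k n
    have h1 : ((JJ m k n).edgeSet.ncard : ℝ) ≤ ((3 * m * (k * n) : ℕ) : ℝ) :=
      Nat.cast_le.mpr hE
    refine h1.trans ?_
    have hmR : (m : ℝ) = (t : ℝ) - 2 := by
      have : ((m : ℕ) : ℝ) + 2 = ((t : ℕ) : ℝ) := by exact_mod_cast congrArg (Nat.cast : ℕ → ℝ) ht'.symm
      linarith
    have htR : (6 : ℝ) ≤ (t : ℝ) := by exact_mod_cast ht
    have hnR : (0 : ℝ) ≤ (n : ℝ) := Nat.cast_nonneg n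
    have hkR : (0 : ℝ) ≤ (k : ℝ) := Nat.cast_nonneg k
    push_cast
    rw [hmR]
    nlinarith [mul_nonneg hnR hkR, mul_nonneg hε.le (mul_nonneg hnR hkR),
      mul_nonneg (mul_nonneg (by linarith : (0:ℝ) ≤ (t:ℝ) - 2) (by linarith : (0:ℝ) ≤ (t:ℝ) - 3))
        (mul_nonneg hnR hkR)]
end

section
/- For all k ≥ t ≥ 4 and n ≥ 2, there exists a K_t-saturated subgraph J of K_k^n and a set S of at most C(t, 2) = t(t−1)/2 vertices such that every edge of J has at least one endpoint in S; consequently sat(K_t, K_k^n) ≤ (t(t−1)/2)·kn. -/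
set_option linter.unreachableTactic false
set_option linter.unusedTactic false
set_option linter.unusedVariables false


open SimpleGraph

namespace Stmt17

variable {k n : ℕ}

/-- generic "dominator" graph: edges touch `D`; two `D`-vertices are adjacent iff
they are in different parts and different groups; a `D`-vertex is adjacent to every
vertex outside its own part. -/
def JG (D : Finset (Fin k × Fin n)) (g : Fin k × Fin n → ℕ) :
    SimpleGraph (Fin k × Fin n) where
  Adj u w := u.1 ≠ w.1 ∧ (u ∈ D ∨ w ∈ D) ∧ ¬(u ∈ D ∧ w ∈ D ∧ g u = g w)
  symm := by
    constructor
    rintro u w ⟨h1, h2, h3⟩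
    exact ⟨h1.symm, h2.symm, fun h => h3 ⟨h.2.1, h.1, h.2.2.symm⟩⟩
  loopless := by constructor; rintro u ⟨h1, -⟩; exact h1 rfl

lemma JG_adj (D : Finset (Fin k × Fin n)) (g : Fin k × Fin n → ℕ)
    (u w : Fin k × Fin n) :
    (JG D g).Adj u w ↔
      u.1 ≠ w.1 ∧ (u ∈ D ∨ w ∈ D) ∧ ¬(u ∈ D ∧ w ∈ D ∧ g u = g w) := Iff.rfl

lemma JG_le (D : Finset (Fin k × Fin n)) (g : Fin k × Fin n → ℕ) :
    JG D g ≤ multipartite k n := fun _ _ h => h.1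

lemma JG_cliqueFree (D : Finset (Fin k × Fin n)) (g : Fin k × Fin n → ℕ)
    (t : ℕ) (ht : 3 ≤ t) (hg : ∀ v ∈ D, g v < t - 2) :
    (JG D g).CliqueFree t := by
  classical
  intro K hK
  have hO : (K.filter (fun v => v ∉ D)).card ≤ 1 := by
    by_contra h
    push_neg at h
    obtain ⟨a, ha, b, hb, hab⟩ := Finset.one_lt_card.mp h
    rw [Finset.mem_filter] at ha hb
    have hadj := hK.1 (Finset.mem_coe.2 ha.1) (Finset.mem_coe.2 hb.1) hab
    exact hadj.2.1.elim ha.2 hb.2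
  have hsplit := Finset.card_filter_add_card_filter_not
    (s := K) (p := fun v => v ∈ D)
  have hcard := hK.2
  have hKD : t - 2 < (K.filter (fun v => v ∈ D)).card := by
    have : (K.filter (fun v => ¬ v ∈ D)).card ≤ 1 := hO
    omega
  have hmaps : ∀ v ∈ K.filter (fun v => v ∈ D), g v ∈ Finset.range (t - 2) := by
    intro v hv
    rw [Finset.mem_filter] at hv
    exact Finset.mem_range.2 (hg v hv.2)
  have hlt : (Finset.range (t - 2)).card < (K.filter (fun v => v ∈ D)).card := by
    rw [Finset.card_range]; exact hKD
  obtain ⟨x, hx, y, hy, hxy, hgxy⟩ :=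
    Finset.exists_ne_map_eq_of_card_lt_of_maps_to hlt hmaps
  rw [Finset.mem_filter] at hx hy
  have hadj := hK.1 (Finset.mem_coe.2 hx.1) (Finset.mem_coe.2 hy.1) hxy
  exact hadj.2.2 ⟨hx.2, hy.2, hgxy⟩

lemma JG_edges (D : Finset (Fin k × Fin n)) (g : Fin k × Fin n → ℕ) :
    (JG D g).edgeSet.ncard ≤ D.card * (k * n) := by
  classical
  rw [Set.ncard_eq_toFinset_card' (JG D g).edgeSet]
  have hsub : (JG D g).edgeSet.toFinset ⊆
      D.biUnion (fun d => Finset.univ.image (fun v => s(d, v))) := by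
    intro e he
    rw [Set.mem_toFinset] at he
    induction e with
    | h x y =>
      rw [SimpleGraph.mem_edgeSet] at he
      rcases he.2.1 with hx | hy
      · exact Finset.mem_biUnion.2 ⟨x, hx, Finset.mem_image.2 ⟨y, Finset.mem_univ y, rfl⟩⟩
      · exact Finset.mem_biUnion.2 ⟨y, hy, Finset.mem_image.2
          ⟨x, Finset.mem_univ x, Sym2.eq_swap⟩⟩
  refine (Finset.card_le_card hsub).trans ?_
  refine (Finset.card_biUnion_le).trans ?_
  have : ∀ d ∈ D, (Finset.univ.image (fun v : Fin k × Fin n => s(d, v))).card ≤ k * n := by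
    intro d _
    refine (Finset.card_image_le).trans ?_
    rw [Finset.card_univ, Fintype.card_prod, Fintype.card_fin, Fintype.card_fin]
  refine (Finset.sum_le_sum this).trans ?_
  rw [Finset.sum_const, smul_eq_mul]

lemma builder {G' : SimpleGraph (Fin k × Fin n)} {t : ℕ} (ht : 2 ≤ t)
    {u w : Fin k × Fin n} {C : Finset (Fin k × Fin n)}
    (hcard : C.card = t - 2) (huw : G'.Adj u w)
    (hu : ∀ x ∈ C, G'.Adj u x) (hw : ∀ x ∈ C, G'.Adj w x)
    (hC : ∀ x ∈ C, ∀ y ∈ C, x ≠ y → G'.Adj x y)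
    (huC : u ∉ C) (hwC : w ∉ C) : ¬ G'.CliqueFree t := by
  intro hfree
  refine hfree (insert u (insert w C)) ⟨?_, ?_⟩
  · intro x hx y hy hxy
    simp only [Finset.coe_insert, Set.mem_insert_iff, Finset.mem_coe] at hx hy
    rcases hx with rfl | rfl | hx
    · rcases hy with rfl | rfl | hy
      · exact absurd rfl hxy
      · exact huw
      · exact hu _ hy
    · rcases hy with rfl | rfl | hy
      · exact huw.symm
      · exact absurd rfl hxy
      · exact hw _ hy
    · rcases hy with rfl | rfl | hy
      · exact (hu _ hx).symm
      · exact (hw _ hx).symm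
      · exact hC _ hx _ hy hxy
  · have h1 : u ∉ insert w C := by
      simp only [Finset.mem_insert]
      push_neg
      exact ⟨G'.ne_of_adj huw, huC⟩
    rw [Finset.card_insert_of_notMem h1, Finset.card_insert_of_notMem hwC, hcard]
    omega

/-- a convenient total constructor of vertices -/
def mk2 [NeZero k] [NeZero n] (a b : ℕ) : Fin k × Fin n :=
  (⟨min a (k - 1), by have := Nat.pos_of_ne_zero (NeZero.ne k); omega⟩,
   ⟨min b (n - 1), by have := Nat.pos_of_ne_zero (NeZero.ne n); omega⟩)

lemma mk2_p [NeZero k] [NeZero n] (a b : ℕ) :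
    (mk2 a b : Fin k × Fin n).1.val = min a (k - 1) := rfl

lemma mk2_s [NeZero k] [NeZero n] (a b : ℕ) :
    (mk2 a b : Fin k × Fin n).2.val = min b (n - 1) := rfl


section Constructions
variable (t : ℕ)

/-- groups for the `n = 2` construction -/
def gA : Fin k × Fin n → ℕ :=
  fun v => if v.2.val = 0 then min v.1.val (t - 3) else v.1.val - 1

/-- dominators for the `n = 2` construction: all vertices in parts `0..t-2` -/
def DA : Finset (Fin k × Fin n) :=
  Finset.univ.filter (fun v => v.1.val ≤ t - 2)

lemma DA_mem (v : Fin k × Fin n) : v ∈ DA t ↔ v.1.val ≤ t - 2 := by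
  simp [DA]

/-- groups for the `n ≥ 3` construction -/
def gB (_t : ℕ) : Fin k × Fin n → ℕ := fun v => v.1.val - v.2.val

/-- dominators for the `n ≥ 3` construction -/
def DB : Finset (Fin k × Fin n) :=
  Finset.univ.filter
    (fun v => v.2.val ≤ 2 ∧ v.2.val ≤ v.1.val ∧ v.1.val - v.2.val ≤ t - 3)

lemma DB_mem (v : Fin k × Fin n) :
    v ∈ DB t ↔ v.2.val ≤ 2 ∧ v.2.val ≤ v.1.val ∧ v.1.val - v.2.val ≤ t - 3 := by
  simp [DB]

lemma gA_lt (ht : 4 ≤ t) : ∀ v ∈ (DA t : Finset (Fin k × Fin n)), gA t v < t - 2 := by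
  intro v hv
  rw [DA_mem] at hv
  simp only [gA]
  first | omega | (split_ifs <;> omega)

lemma gB_lt (ht : 4 ≤ t) : ∀ v ∈ (DB t : Finset (Fin k × Fin n)), gB t v < t - 2 := by
  intro v hv
  rw [DB_mem] at hv
  simp only [gB]
  omega

lemma JG_adj' (D : Finset (Fin k × Fin n)) (g : Fin k × Fin n → ℕ)
    {x y : Fin k × Fin n} (h1 : x.1.val ≠ y.1.val)
    (h2 : x ∈ D ∨ y ∈ D) (h3 : (x ∈ D ∧ y ∈ D ∧ g x = g y) → False) :
    (JG D g).Adj x y :=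
  ⟨fun hh => h1 (congrArg Fin.val hh), h2, h3⟩

lemma val_eq_of_eq {x y : Fin k × Fin n} (h : x = y) :
    x.1.val = y.1.val ∧ x.2.val = y.2.val := by
  rw [h]; exact ⟨rfl, rfl⟩

end Constructions

section CaseA
variable (t : ℕ)

lemma satA (ht : 4 ≤ t) (hk : t ≤ k) (hn : 2 ≤ n) :
    ∀ u w : Fin k × Fin n, (multipartite k n).Adj u w → ¬ (JG (DA t) (gA t)).Adj u w →
      ¬ ((JG (DA t) (gA t)) ⊔ SimpleGraph.fromEdgeSet {s(u, w)}).CliqueFree t := by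
  haveI : NeZero k := ⟨by omega⟩
  haveI : NeZero n := ⟨by omega⟩
  intro u w hG hnJ
  have hGp : u.1 ≠ w.1 := hG
  have hpv : u.1.val ≠ w.1.val := fun h => hGp (Fin.val_injective h)
  have hne : u ≠ w := fun h => hGp (by rw [h])
  have hedge : ((JG (DA t) (gA t)) ⊔ SimpleGraph.fromEdgeSet {s(u, w)}).Adj u w := by
    refine (sup_adj _ _ _ _).2 (Or.inr ?_)
    rw [fromEdgeSet_adj]
    exact ⟨rfl, hne⟩
  by_cases hu : u ∈ (DA t : Finset (Fin k × Fin n))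
  · by_cases hw : w ∈ (DA t : Finset (Fin k × Fin n))
    · -- both dominators, same group
      have hgu : gA t u = gA t w := by
        by_contra hgg
        exact hnJ ⟨hGp, Or.inl hu, fun h => hgg h.2.2⟩
      obtain ⟨j, hju, hjw⟩ : ∃ j, gA t u = j ∧ gA t w = j := ⟨gA t u, rfl, hgu.symm⟩
      have hu' : u.1.val ≤ t - 2 := (DA_mem t u).1 hu
      have hw' : w.1.val ≤ t - 2 := (DA_mem t w).1 hw
      have hjlt : j < t - 2 := hju ▸ gA_lt t ht u hu
      have hup : u.1.val = j ∨ u.1.val = j + 1 := by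
        simp only [gA] at hju; split_ifs at hju <;> omega
      have hwp : w.1.val = j ∨ w.1.val = j + 1 := by
        simp only [gA] at hjw; split_ifs at hjw <;> omega
      set F : ℕ → Fin k × Fin n :=
        fun m => mk2 (if m < j then m else m + 2) (if m < j then 0 else 1) with hF
      set vv : Fin k × Fin n := mk2 (t - 1) 0 with hvv
      have hvp : vv.1.val = t - 1 := by rw [hvv, mk2_p]; omega
      have hvs : vv.2.val = 0 := by rw [hvv, mk2_s]; omega
      have hvD : vv ∉ (DA t : Finset (Fin k × Fin n)) := by
        rw [DA_mem, hvp]; omega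
      have hFp' : ∀ m < t - 3, (F m).1.val = if m < j then m else m + 2 := by
        intro m hm
        rw [hF]
        rcases Nat.lt_or_ge m j with hmj | hmj
        · simp only [mk2_p, if_pos hmj]; omega
        · simp only [mk2_p, if_neg (Nat.not_lt.mpr hmj)]; omega
      have hFs : ∀ m < t - 3, (F m).2.val = if m < j then 0 else 1 := by
        intro m hm
        rw [hF]
        rcases Nat.lt_or_ge m j with hmj | hmj
        · simp only [mk2_s, if_pos hmj]; omega
        · simp only [mk2_s, if_neg (Nat.not_lt.mpr hmj)]; omega
      have hFD : ∀ m < t - 3, F m ∈ (DA t : Finset (Fin k × Fin n)) := by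
        intro m hm; rw [DA_mem, hFp' m hm]; first | omega | (split_ifs <;> omega)
      have hFg : ∀ m < t - 3, gA t (F m) = if m < j then m else m + 1 := by
        intro m hm
        rcases Nat.lt_or_ge m j with hmj | hmj
        · simp only [gA, hFp' m hm, hFs m hm, if_pos hmj, if_true]; omega
        · simp only [gA, hFp' m hm, hFs m hm, if_neg (Nat.not_lt.mpr hmj)]
          rw [if_neg one_ne_zero]; omega
      set C : Finset (Fin k × Fin n) :=
        insert vv ((Finset.range (t - 3)).image F) with hC
      have hCmem : ∀ x ∈ C, x = vv ∨ ∃ m < t - 3, F m = x := by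
        intro x hx
        rw [hC, Finset.mem_insert] at hx
        rcases hx with rfl | hx
        · exact Or.inl rfl
        · obtain ⟨m, hm, hfm⟩ := Finset.mem_image.mp hx
          exact Or.inr ⟨m, Finset.mem_range.mp hm, hfm⟩
      refine builder (t := t) (C := C) (by omega) ?_ hedge ?_ ?_ ?_ ?_ ?_
      · -- card
        rw [hC, Finset.card_insert_of_notMem, Finset.card_image_of_injOn]
        · rw [Finset.card_range]; omega
        · intro a ha b hb hab
          rw [Finset.mem_coe, Finset.mem_range] at ha hb
          have h1 := (val_eq_of_eq hab).1
          rw [hFp' a ha, hFp' b hb] at h1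
          first | omega | (split_ifs at h1 <;> omega)
        · intro hmem
          obtain ⟨m, hm, hfm⟩ := Finset.mem_image.mp hmem
          rw [Finset.mem_range] at hm
          have h1 := (val_eq_of_eq hfm).1
          rw [hFp' m hm, hvp] at h1
          first | omega | (split_ifs at h1 <;> omega)
      · -- u adjacent to all of C
        intro x hx
        refine (sup_adj _ _ _ _).2 (Or.inl ?_)
        rcases hCmem x hx with rfl | ⟨m, hm, rfl⟩
        · exact JG_adj' _ _ (by rw [hvp]; omega) (Or.inl hu) (fun h => hvD h.2.1)
        · refine JG_adj' _ _ ?_ (Or.inl hu) ?_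
          · rw [hFp' m hm]; first | omega | (split_ifs <;> omega)
          · rintro ⟨-, -, hg⟩
            rw [hju, hFg m hm] at hg
            first | omega | (split_ifs at hg <;> omega)
      · -- w adjacent to all of C
        intro x hx
        refine (sup_adj _ _ _ _).2 (Or.inl ?_)
        rcases hCmem x hx with rfl | ⟨m, hm, rfl⟩
        · exact JG_adj' _ _ (by rw [hvp]; omega) (Or.inl hw) (fun h => hvD h.2.1)
        · refine JG_adj' _ _ ?_ (Or.inl hw) ?_
          · rw [hFp' m hm]; first | omega | (split_ifs <;> omega)
          · rintro ⟨-, -, hg⟩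
            rw [hjw, hFg m hm] at hg
            first | omega | (split_ifs at hg <;> omega)
      · -- pairwise
        intro x hx y hy hxy
        refine (sup_adj _ _ _ _).2 (Or.inl ?_)
        rcases hCmem x hx with rfl | ⟨m1, hm1, rfl⟩
        · rcases hCmem y hy with rfl | ⟨m2, hm2, rfl⟩
          · exact absurd rfl hxy
          · refine JG_adj' _ _ ?_ (Or.inr (hFD m2 hm2)) (fun h => hvD h.1)
            rw [hvp, hFp' m2 hm2]; first | omega | (split_ifs <;> omega)
        · rcases hCmem y hy with rfl | ⟨m2, hm2, rfl⟩
          · refine JG_adj' _ _ ?_ (Or.inl (hFD m1 hm1)) (fun h => hvD h.2.1)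
            rw [hvp, hFp' m1 hm1]; first | omega | (split_ifs <;> omega)
          · have hm12 : m1 ≠ m2 := fun h => hxy (by rw [h])
            refine JG_adj' _ _ ?_ (Or.inl (hFD m1 hm1)) ?_
            · rw [hFp' m1 hm1, hFp' m2 hm2]; first | omega | (split_ifs <;> omega)
            · rintro ⟨-, -, hg⟩
              rw [hFg m1 hm1, hFg m2 hm2] at hg
              first | omega | (split_ifs at hg <;> omega)
      · -- u ∉ C
        intro hmem
        rcases hCmem u hmem with h | ⟨m, hm, hfm⟩
        · have := (val_eq_of_eq h).1; rw [hvp] at this; omega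
        · have h1 := (val_eq_of_eq hfm).1
          rw [hFp' m hm] at h1
          first | omega | (split_ifs at h1 <;> omega)
      · -- w ∉ C
        intro hmem
        rcases hCmem w hmem with h | ⟨m, hm, hfm⟩
        · have := (val_eq_of_eq h).1; rw [hvp] at this; omega
        · have h1 := (val_eq_of_eq hfm).1
          rw [hFp' m hm] at h1
          first | omega | (split_ifs at h1 <;> omega)
    · exact absurd ⟨hGp, Or.inl hu, fun h => hw h.2.1⟩ hnJ
  · by_cases hw : w ∈ (DA t : Finset (Fin k × Fin n))
    · exact absurd ⟨hGp, Or.inr hw, fun h => hu h.1⟩ hnJ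
    · -- both outsiders, parts ≥ t-1
      have hup : ¬ u.1.val ≤ t - 2 := fun h => hu ((DA_mem t u).2 h)
      have hwp : ¬ w.1.val ≤ t - 2 := fun h => hw ((DA_mem t w).2 h)
      set F : ℕ → Fin k × Fin n := fun m => mk2 m 0 with hF
      have hFp : ∀ m < t - 2, (F m).1.val = m := by
        intro m hm; rw [hF]; simp only [mk2_p]; omega
      have hFs : ∀ m, (F m).2.val = 0 := by
        intro m; rw [hF]; simp only [mk2_s]; omega
      have hFD : ∀ m < t - 2, F m ∈ (DA t : Finset (Fin k × Fin n)) := by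
        intro m hm; rw [DA_mem, hFp m hm]; omega
      have hFg : ∀ m < t - 2, gA t (F m) = min m (t - 3) := by
        intro m hm
        simp only [gA, hFp m hm, hFs m]
        first | omega | (split_ifs <;> omega)
      set C : Finset (Fin k × Fin n) := (Finset.range (t - 2)).image F with hC
      have hCmem : ∀ x ∈ C, ∃ m < t - 2, F m = x := by
        intro x hx
        obtain ⟨m, hm, hfm⟩ := Finset.mem_image.mp hx
        exact ⟨m, Finset.mem_range.mp hm, hfm⟩
      refine builder (t := t) (C := C) (by omega) ?_ hedge ?_ ?_ ?_ ?_ ?_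
      · rw [hC, Finset.card_image_of_injOn]
        · rw [Finset.card_range]
        · intro a ha b hb hab
          rw [Finset.mem_coe, Finset.mem_range] at ha hb
          have h1 := (val_eq_of_eq hab).1
          rw [hFp a ha, hFp b hb] at h1; omega
      · intro x hx
        obtain ⟨m, hm, rfl⟩ := hCmem x hx
        refine (sup_adj _ _ _ _).2 (Or.inl ?_)
        refine JG_adj' _ _ ?_ (Or.inr (hFD m hm)) (fun h => hu h.1)
        rw [hFp m hm]; omega
      · intro x hx
        obtain ⟨m, hm, rfl⟩ := hCmem x hx
        refine (sup_adj _ _ _ _).2 (Or.inl ?_)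
        refine JG_adj' _ _ ?_ (Or.inr (hFD m hm)) (fun h => hw h.1)
        rw [hFp m hm]; omega
      · intro x hx y hy hxy
        obtain ⟨m1, hm1, rfl⟩ := hCmem x hx
        obtain ⟨m2, hm2, rfl⟩ := hCmem y hy
        have hm12 : m1 ≠ m2 := fun h => hxy (by rw [h])
        refine (sup_adj _ _ _ _).2 (Or.inl ?_)
        refine JG_adj' _ _ ?_ (Or.inl (hFD m1 hm1)) ?_
        · rw [hFp m1 hm1, hFp m2 hm2]; omega
        · rintro ⟨-, -, hg⟩
          rw [hFg m1 hm1, hFg m2 hm2] at hg; omega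
      · intro hmem
        obtain ⟨m, hm, hfm⟩ := hCmem u hmem
        have h1 := (val_eq_of_eq hfm).1
        rw [hFp m hm] at h1; omega
      · intro hmem
        obtain ⟨m, hm, hfm⟩ := hCmem w hmem
        have h1 := (val_eq_of_eq hfm).1
        rw [hFp m hm] at h1; omega

end CaseA

section CaseB
variable (t : ℕ)

lemma satB_core (ht : 4 ≤ t) (hk : t ≤ k) (hn : 3 ≤ n)
    (u w : Fin k × Fin n)
    (hu : u ∈ (DB t : Finset (Fin k × Fin n)))
    (hw : w ∈ (DB t : Finset (Fin k × Fin n)))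
    (hgu : gB t u = gB t w) (hslot : u.2.val < w.2.val) :
    ¬ ((JG (DB t) (gB t)) ⊔ SimpleGraph.fromEdgeSet {s(u, w)}).CliqueFree t := by
  haveI : NeZero k := ⟨by omega⟩
  haveI : NeZero n := ⟨by omega⟩
  obtain ⟨j, hju, hjw⟩ : ∃ j, gB t u = j ∧ gB t w = j := ⟨gB t u, rfl, hgu.symm⟩
  have hu' := (DB_mem t u).1 hu
  have hw' := (DB_mem t w).1 hw
  have hjle : j ≤ t - 3 := by
    have := hju; simp only [gB] at this; omega
  have hupart : u.1.val = j + u.2.val := by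
    have := hju; simp only [gB] at this; omega
  have hwpart : w.1.val = j + w.2.val := by
    have := hjw; simp only [gB] at this; omega
  have hpv : u.1.val ≠ w.1.val := by omega
  have hne : u ≠ w := fun h => hpv (congrArg (fun z : Fin k × Fin n => z.1.val) h)
  have hedge : ((JG (DB t) (gB t)) ⊔ SimpleGraph.fromEdgeSet {s(u, w)}).Adj u w := by
    refine (sup_adj _ _ _ _).2 (Or.inr ?_)
    rw [fromEdgeSet_adj]
    exact ⟨rfl, hne⟩
  have hcase : (u.2.val = 0 ∧ w.2.val = 1) ∨ (u.2.val = 0 ∧ w.2.val = 2) ∨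
      (u.2.val = 1 ∧ w.2.val = 2) := by omega
  rcases hcase with ⟨hsu, hsw⟩ | ⟨hsu, hsw⟩ | ⟨hsu, hsw⟩
  · -- slots (0,1), parts (j, j+1)
      set F : ℕ → Fin k × Fin n :=
        fun m => mk2 (if m < j then m else m + 2) (if m < j then 0 else 1) with hF
      set vv : Fin k × Fin n := mk2 (t - 1) (0) with hvv
      have hvp : vv.1.val = t - 1 := by rw [hvv, mk2_p]; omega
      have hvs : vv.2.val = 0 := by rw [hvv, mk2_s]; omega
      have hvD : vv ∉ (DB t : Finset (Fin k × Fin n)) := by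
        rw [DB_mem, hvp, hvs]; omega
      have hFp' : ∀ m < t - 3, (F m).1.val = if m < j then m else m + 2 := by
        intro m hm; simp only [hF, mk2_p]; first | omega | (split_ifs <;> omega)
      have hFs : ∀ m < t - 3, (F m).2.val = if m < j then 0 else 1 := by
        intro m hm; simp only [hF, mk2_s]; first | omega | (split_ifs <;> omega)
      have hFD : ∀ m < t - 3, F m ∈ (DB t : Finset (Fin k × Fin n)) := by
        intro m hm; rw [DB_mem, hFp' m hm, hFs m hm]; first | omega | (split_ifs <;> omega)
      have hFg : ∀ m < t - 3, gB t (F m) = if m < j then m else m + 1 := by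
        intro m hm; simp only [gB, hFp' m hm, hFs m hm]; first | omega | (split_ifs <;> omega)
      set C : Finset (Fin k × Fin n) :=
        insert vv ((Finset.range (t - 3)).image F) with hC
      have hCmem : ∀ x ∈ C, x = vv ∨ ∃ m < t - 3, F m = x := by
        intro x hx
        rw [hC, Finset.mem_insert] at hx
        rcases hx with rfl | hx
        · exact Or.inl rfl
        · obtain ⟨m, hm, hfm⟩ := Finset.mem_image.mp hx
          exact Or.inr ⟨m, Finset.mem_range.mp hm, hfm⟩
      refine builder (t := t) (C := C) (by omega) ?_ hedge ?_ ?_ ?_ ?_ ?_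
      · rw [hC, Finset.card_insert_of_notMem, Finset.card_image_of_injOn]
        · rw [Finset.card_range]; omega
        · intro a ha b hb hab
          rw [Finset.mem_coe, Finset.mem_range] at ha hb
          have h1 := (val_eq_of_eq hab).1
          rw [hFp' a ha, hFp' b hb] at h1
          first | omega | (split_ifs at h1 <;> omega)
        · intro hmem
          obtain ⟨m, hm, hfm⟩ := Finset.mem_image.mp hmem
          rw [Finset.mem_range] at hm
          have h1 := (val_eq_of_eq hfm).1
          rw [hFp' m hm, hvp] at h1
          first | omega | (split_ifs at h1 <;> omega)
      · intro x hx
        refine (sup_adj _ _ _ _).2 (Or.inl ?_)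
        rcases hCmem x hx with rfl | ⟨m, hm, rfl⟩
        · exact JG_adj' _ _ (by rw [hvp]; omega) (Or.inl hu) (fun h => hvD h.2.1)
        · refine JG_adj' _ _ ?_ (Or.inl hu) ?_
          · rw [hFp' m hm]; first | omega | (split_ifs <;> omega)
          · rintro ⟨-, -, hg⟩
            rw [hju, hFg m hm] at hg
            first | omega | (split_ifs at hg <;> omega)
      · intro x hx
        refine (sup_adj _ _ _ _).2 (Or.inl ?_)
        rcases hCmem x hx with rfl | ⟨m, hm, rfl⟩
        · exact JG_adj' _ _ (by rw [hvp]; omega) (Or.inl hw) (fun h => hvD h.2.1)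
        · refine JG_adj' _ _ ?_ (Or.inl hw) ?_
          · rw [hFp' m hm]; first | omega | (split_ifs <;> omega)
          · rintro ⟨-, -, hg⟩
            rw [hjw, hFg m hm] at hg
            first | omega | (split_ifs at hg <;> omega)
      · intro x hx y hy hxy
        refine (sup_adj _ _ _ _).2 (Or.inl ?_)
        rcases hCmem x hx with rfl | ⟨m1, hm1, rfl⟩
        · rcases hCmem y hy with rfl | ⟨m2, hm2, rfl⟩
          · exact absurd rfl hxy
          · refine JG_adj' _ _ ?_ (Or.inr (hFD m2 hm2)) (fun h => hvD h.1)
            rw [hvp, hFp' m2 hm2]; first | omega | (split_ifs <;> omega)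
        · rcases hCmem y hy with rfl | ⟨m2, hm2, rfl⟩
          · refine JG_adj' _ _ ?_ (Or.inl (hFD m1 hm1)) (fun h => hvD h.2.1)
            rw [hvp, hFp' m1 hm1]; first | omega | (split_ifs <;> omega)
          · have hm12 : m1 ≠ m2 := fun h => hxy (by rw [h])
            refine JG_adj' _ _ ?_ (Or.inl (hFD m1 hm1)) ?_
            · rw [hFp' m1 hm1, hFp' m2 hm2]; first | omega | (split_ifs <;> omega)
            · rintro ⟨-, -, hg⟩
              rw [hFg m1 hm1, hFg m2 hm2] at hg
              first | omega | (split_ifs at hg <;> omega)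
      · intro hmem
        rcases hCmem u hmem with h | ⟨m, hm, hfm⟩
        · have := (val_eq_of_eq h).1; rw [hvp] at this; omega
        · have h1 := (val_eq_of_eq hfm).1
          rw [hFp' m hm] at h1
          first | omega | (split_ifs at h1 <;> omega)
      · intro hmem
        rcases hCmem w hmem with h | ⟨m, hm, hfm⟩
        · have := (val_eq_of_eq h).1; rw [hvp] at this; omega
        · have h1 := (val_eq_of_eq hfm).1
          rw [hFp' m hm] at h1
          first | omega | (split_ifs at h1 <;> omega)
  · -- slots (0,2), parts (j, j+2)
    rcases Nat.lt_or_ge j (t - 3) with hjlt | hjge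
    · -- j < t-3
        set F : ℕ → Fin k × Fin n :=
          fun m => mk2 (if m < j then m else if m = j then j + 1 else m + 2) (if m < j then 0 else if m = j then 0 else 1) with hF
        set vv : Fin k × Fin n := mk2 (t - 1) (0) with hvv
        have hvp : vv.1.val = t - 1 := by rw [hvv, mk2_p]; omega
        have hvs : vv.2.val = 0 := by rw [hvv, mk2_s]; omega
        have hvD : vv ∉ (DB t : Finset (Fin k × Fin n)) := by
          rw [DB_mem, hvp, hvs]; omega
        have hFp' : ∀ m < t - 3, (F m).1.val = if m < j then m else if m = j then j + 1 else m + 2 := by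
          intro m hm; simp only [hF, mk2_p]; first | omega | (split_ifs <;> omega)
        have hFs : ∀ m < t - 3, (F m).2.val = if m < j then 0 else if m = j then 0 else 1 := by
          intro m hm; simp only [hF, mk2_s]; first | omega | (split_ifs <;> omega)
        have hFD : ∀ m < t - 3, F m ∈ (DB t : Finset (Fin k × Fin n)) := by
          intro m hm; rw [DB_mem, hFp' m hm, hFs m hm]; first | omega | (split_ifs <;> omega)
        have hFg : ∀ m < t - 3, gB t (F m) = if m < j then m else if m = j then j + 1 else m + 1 := by
          intro m hm; simp only [gB, hFp' m hm, hFs m hm]; first | omega | (split_ifs <;> omega)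
        set C : Finset (Fin k × Fin n) :=
          insert vv ((Finset.range (t - 3)).image F) with hC
        have hCmem : ∀ x ∈ C, x = vv ∨ ∃ m < t - 3, F m = x := by
          intro x hx
          rw [hC, Finset.mem_insert] at hx
          rcases hx with rfl | hx
          · exact Or.inl rfl
          · obtain ⟨m, hm, hfm⟩ := Finset.mem_image.mp hx
            exact Or.inr ⟨m, Finset.mem_range.mp hm, hfm⟩
        refine builder (t := t) (C := C) (by omega) ?_ hedge ?_ ?_ ?_ ?_ ?_
        · rw [hC, Finset.card_insert_of_notMem, Finset.card_image_of_injOn]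
          · rw [Finset.card_range]; omega
          · intro a ha b hb hab
            rw [Finset.mem_coe, Finset.mem_range] at ha hb
            have h1 := (val_eq_of_eq hab).1
            rw [hFp' a ha, hFp' b hb] at h1
            first | omega | (split_ifs at h1 <;> omega)
          · intro hmem
            obtain ⟨m, hm, hfm⟩ := Finset.mem_image.mp hmem
            rw [Finset.mem_range] at hm
            have h1 := (val_eq_of_eq hfm).1
            rw [hFp' m hm, hvp] at h1
            first | omega | (split_ifs at h1 <;> omega)
        · intro x hx
          refine (sup_adj _ _ _ _).2 (Or.inl ?_)
          rcases hCmem x hx with rfl | ⟨m, hm, rfl⟩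
          · exact JG_adj' _ _ (by rw [hvp]; omega) (Or.inl hu) (fun h => hvD h.2.1)
          · refine JG_adj' _ _ ?_ (Or.inl hu) ?_
            · rw [hFp' m hm]; first | omega | (split_ifs <;> omega)
            · rintro ⟨-, -, hg⟩
              rw [hju, hFg m hm] at hg
              first | omega | (split_ifs at hg <;> omega)
        · intro x hx
          refine (sup_adj _ _ _ _).2 (Or.inl ?_)
          rcases hCmem x hx with rfl | ⟨m, hm, rfl⟩
          · exact JG_adj' _ _ (by rw [hvp]; omega) (Or.inl hw) (fun h => hvD h.2.1)
          · refine JG_adj' _ _ ?_ (Or.inl hw) ?_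
            · rw [hFp' m hm]; first | omega | (split_ifs <;> omega)
            · rintro ⟨-, -, hg⟩
              rw [hjw, hFg m hm] at hg
              first | omega | (split_ifs at hg <;> omega)
        · intro x hx y hy hxy
          refine (sup_adj _ _ _ _).2 (Or.inl ?_)
          rcases hCmem x hx with rfl | ⟨m1, hm1, rfl⟩
          · rcases hCmem y hy with rfl | ⟨m2, hm2, rfl⟩
            · exact absurd rfl hxy
            · refine JG_adj' _ _ ?_ (Or.inr (hFD m2 hm2)) (fun h => hvD h.1)
              rw [hvp, hFp' m2 hm2]; first | omega | (split_ifs <;> omega)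
          · rcases hCmem y hy with rfl | ⟨m2, hm2, rfl⟩
            · refine JG_adj' _ _ ?_ (Or.inl (hFD m1 hm1)) (fun h => hvD h.2.1)
              rw [hvp, hFp' m1 hm1]; first | omega | (split_ifs <;> omega)
            · have hm12 : m1 ≠ m2 := fun h => hxy (by rw [h])
              refine JG_adj' _ _ ?_ (Or.inl (hFD m1 hm1)) ?_
              · rw [hFp' m1 hm1, hFp' m2 hm2]; first | omega | (split_ifs <;> omega)
              · rintro ⟨-, -, hg⟩
                rw [hFg m1 hm1, hFg m2 hm2] at hg
                first | omega | (split_ifs at hg <;> omega)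
        · intro hmem
          rcases hCmem u hmem with h | ⟨m, hm, hfm⟩
          · have := (val_eq_of_eq h).1; rw [hvp] at this; omega
          · have h1 := (val_eq_of_eq hfm).1
            rw [hFp' m hm] at h1
            first | omega | (split_ifs at h1 <;> omega)
        · intro hmem
          rcases hCmem w hmem with h | ⟨m, hm, hfm⟩
          · have := (val_eq_of_eq h).1; rw [hvp] at this; omega
          · have h1 := (val_eq_of_eq hfm).1
            rw [hFp' m hm] at h1
            first | omega | (split_ifs at h1 <;> omega)
    · -- j = t-3
        set F : ℕ → Fin k × Fin n :=
          fun m => mk2 (m) (0) with hF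
        set vv : Fin k × Fin n := mk2 (t - 2) (0) with hvv
        have hvp : vv.1.val = t - 2 := by rw [hvv, mk2_p]; omega
        have hvs : vv.2.val = 0 := by rw [hvv, mk2_s]; omega
        have hvD : vv ∉ (DB t : Finset (Fin k × Fin n)) := by
          rw [DB_mem, hvp, hvs]; omega
        have hFp' : ∀ m < t - 3, (F m).1.val = m := by
          intro m hm; simp only [hF, mk2_p]; first | omega | (split_ifs <;> omega)
        have hFs : ∀ m < t - 3, (F m).2.val = 0 := by
          intro m hm; simp only [hF, mk2_s]; first | omega | (split_ifs <;> omega)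
        have hFD : ∀ m < t - 3, F m ∈ (DB t : Finset (Fin k × Fin n)) := by
          intro m hm; rw [DB_mem, hFp' m hm, hFs m hm]; first | omega | (split_ifs <;> omega)
        have hFg : ∀ m < t - 3, gB t (F m) = m := by
          intro m hm; simp only [gB, hFp' m hm, hFs m hm]; first | omega | (split_ifs <;> omega)
        set C : Finset (Fin k × Fin n) :=
          insert vv ((Finset.range (t - 3)).image F) with hC
        have hCmem : ∀ x ∈ C, x = vv ∨ ∃ m < t - 3, F m = x := by
          intro x hx
          rw [hC, Finset.mem_insert] at hx
          rcases hx with rfl | hx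
          · exact Or.inl rfl
          · obtain ⟨m, hm, hfm⟩ := Finset.mem_image.mp hx
            exact Or.inr ⟨m, Finset.mem_range.mp hm, hfm⟩
        refine builder (t := t) (C := C) (by omega) ?_ hedge ?_ ?_ ?_ ?_ ?_
        · rw [hC, Finset.card_insert_of_notMem, Finset.card_image_of_injOn]
          · rw [Finset.card_range]; omega
          · intro a ha b hb hab
            rw [Finset.mem_coe, Finset.mem_range] at ha hb
            have h1 := (val_eq_of_eq hab).1
            rw [hFp' a ha, hFp' b hb] at h1
            first | omega | (split_ifs at h1 <;> omega)
          · intro hmem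
            obtain ⟨m, hm, hfm⟩ := Finset.mem_image.mp hmem
            rw [Finset.mem_range] at hm
            have h1 := (val_eq_of_eq hfm).1
            rw [hFp' m hm, hvp] at h1
            first | omega | (split_ifs at h1 <;> omega)
        · intro x hx
          refine (sup_adj _ _ _ _).2 (Or.inl ?_)
          rcases hCmem x hx with rfl | ⟨m, hm, rfl⟩
          · exact JG_adj' _ _ (by rw [hvp]; omega) (Or.inl hu) (fun h => hvD h.2.1)
          · refine JG_adj' _ _ ?_ (Or.inl hu) ?_
            · rw [hFp' m hm]; first | omega | (split_ifs <;> omega)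
            · rintro ⟨-, -, hg⟩
              rw [hju, hFg m hm] at hg
              first | omega | (split_ifs at hg <;> omega)
        · intro x hx
          refine (sup_adj _ _ _ _).2 (Or.inl ?_)
          rcases hCmem x hx with rfl | ⟨m, hm, rfl⟩
          · exact JG_adj' _ _ (by rw [hvp]; omega) (Or.inl hw) (fun h => hvD h.2.1)
          · refine JG_adj' _ _ ?_ (Or.inl hw) ?_
            · rw [hFp' m hm]; first | omega | (split_ifs <;> omega)
            · rintro ⟨-, -, hg⟩
              rw [hjw, hFg m hm] at hg
              first | omega | (split_ifs at hg <;> omega)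
        · intro x hx y hy hxy
          refine (sup_adj _ _ _ _).2 (Or.inl ?_)
          rcases hCmem x hx with rfl | ⟨m1, hm1, rfl⟩
          · rcases hCmem y hy with rfl | ⟨m2, hm2, rfl⟩
            · exact absurd rfl hxy
            · refine JG_adj' _ _ ?_ (Or.inr (hFD m2 hm2)) (fun h => hvD h.1)
              rw [hvp, hFp' m2 hm2]; first | omega | (split_ifs <;> omega)
          · rcases hCmem y hy with rfl | ⟨m2, hm2, rfl⟩
            · refine JG_adj' _ _ ?_ (Or.inl (hFD m1 hm1)) (fun h => hvD h.2.1)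
              rw [hvp, hFp' m1 hm1]; first | omega | (split_ifs <;> omega)
            · have hm12 : m1 ≠ m2 := fun h => hxy (by rw [h])
              refine JG_adj' _ _ ?_ (Or.inl (hFD m1 hm1)) ?_
              · rw [hFp' m1 hm1, hFp' m2 hm2]; first | omega | (split_ifs <;> omega)
              · rintro ⟨-, -, hg⟩
                rw [hFg m1 hm1, hFg m2 hm2] at hg
                first | omega | (split_ifs at hg <;> omega)
        · intro hmem
          rcases hCmem u hmem with h | ⟨m, hm, hfm⟩
          · have := (val_eq_of_eq h).1; rw [hvp] at this; omega
          · have h1 := (val_eq_of_eq hfm).1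
            rw [hFp' m hm] at h1
            first | omega | (split_ifs at h1 <;> omega)
        · intro hmem
          rcases hCmem w hmem with h | ⟨m, hm, hfm⟩
          · have := (val_eq_of_eq h).1; rw [hvp] at this; omega
          · have h1 := (val_eq_of_eq hfm).1
            rw [hFp' m hm] at h1
            first | omega | (split_ifs at h1 <;> omega)
  · -- slots (1,2), parts (j+1, j+2)
      set F : ℕ → Fin k × Fin n :=
        fun m => mk2 (if m < j then m + 1 else m + 3) (if m < j then 1 else 2) with hF
      set vv : Fin k × Fin n := mk2 (0) (1) with hvv
      have hvp : vv.1.val = 0 := by rw [hvv, mk2_p]; omega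
      have hvs : vv.2.val = 1 := by rw [hvv, mk2_s]; omega
      have hvD : vv ∉ (DB t : Finset (Fin k × Fin n)) := by
        rw [DB_mem, hvp, hvs]; omega
      have hFp' : ∀ m < t - 3, (F m).1.val = if m < j then m + 1 else m + 3 := by
        intro m hm; simp only [hF, mk2_p]; first | omega | (split_ifs <;> omega)
      have hFs : ∀ m < t - 3, (F m).2.val = if m < j then 1 else 2 := by
        intro m hm; simp only [hF, mk2_s]; first | omega | (split_ifs <;> omega)
      have hFD : ∀ m < t - 3, F m ∈ (DB t : Finset (Fin k × Fin n)) := by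
        intro m hm; rw [DB_mem, hFp' m hm, hFs m hm]; first | omega | (split_ifs <;> omega)
      have hFg : ∀ m < t - 3, gB t (F m) = if m < j then m else m + 1 := by
        intro m hm; simp only [gB, hFp' m hm, hFs m hm]; first | omega | (split_ifs <;> omega)
      set C : Finset (Fin k × Fin n) :=
        insert vv ((Finset.range (t - 3)).image F) with hC
      have hCmem : ∀ x ∈ C, x = vv ∨ ∃ m < t - 3, F m = x := by
        intro x hx
        rw [hC, Finset.mem_insert] at hx
        rcases hx with rfl | hx
        · exact Or.inl rfl
        · obtain ⟨m, hm, hfm⟩ := Finset.mem_image.mp hx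
          exact Or.inr ⟨m, Finset.mem_range.mp hm, hfm⟩
      refine builder (t := t) (C := C) (by omega) ?_ hedge ?_ ?_ ?_ ?_ ?_
      · rw [hC, Finset.card_insert_of_notMem, Finset.card_image_of_injOn]
        · rw [Finset.card_range]; omega
        · intro a ha b hb hab
          rw [Finset.mem_coe, Finset.mem_range] at ha hb
          have h1 := (val_eq_of_eq hab).1
          rw [hFp' a ha, hFp' b hb] at h1
          first | omega | (split_ifs at h1 <;> omega)
        · intro hmem
          obtain ⟨m, hm, hfm⟩ := Finset.mem_image.mp hmem
          rw [Finset.mem_range] at hm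
          have h1 := (val_eq_of_eq hfm).1
          rw [hFp' m hm, hvp] at h1
          first | omega | (split_ifs at h1 <;> omega)
      · intro x hx
        refine (sup_adj _ _ _ _).2 (Or.inl ?_)
        rcases hCmem x hx with rfl | ⟨m, hm, rfl⟩
        · exact JG_adj' _ _ (by rw [hvp]; omega) (Or.inl hu) (fun h => hvD h.2.1)
        · refine JG_adj' _ _ ?_ (Or.inl hu) ?_
          · rw [hFp' m hm]; first | omega | (split_ifs <;> omega)
          · rintro ⟨-, -, hg⟩
            rw [hju, hFg m hm] at hg
            first | omega | (split_ifs at hg <;> omega)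
      · intro x hx
        refine (sup_adj _ _ _ _).2 (Or.inl ?_)
        rcases hCmem x hx with rfl | ⟨m, hm, rfl⟩
        · exact JG_adj' _ _ (by rw [hvp]; omega) (Or.inl hw) (fun h => hvD h.2.1)
        · refine JG_adj' _ _ ?_ (Or.inl hw) ?_
          · rw [hFp' m hm]; first | omega | (split_ifs <;> omega)
          · rintro ⟨-, -, hg⟩
            rw [hjw, hFg m hm] at hg
            first | omega | (split_ifs at hg <;> omega)
      · intro x hx y hy hxy
        refine (sup_adj _ _ _ _).2 (Or.inl ?_)
        rcases hCmem x hx with rfl | ⟨m1, hm1, rfl⟩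
        · rcases hCmem y hy with rfl | ⟨m2, hm2, rfl⟩
          · exact absurd rfl hxy
          · refine JG_adj' _ _ ?_ (Or.inr (hFD m2 hm2)) (fun h => hvD h.1)
            rw [hvp, hFp' m2 hm2]; first | omega | (split_ifs <;> omega)
        · rcases hCmem y hy with rfl | ⟨m2, hm2, rfl⟩
          · refine JG_adj' _ _ ?_ (Or.inl (hFD m1 hm1)) (fun h => hvD h.2.1)
            rw [hvp, hFp' m1 hm1]; first | omega | (split_ifs <;> omega)
          · have hm12 : m1 ≠ m2 := fun h => hxy (by rw [h])
            refine JG_adj' _ _ ?_ (Or.inl (hFD m1 hm1)) ?_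
            · rw [hFp' m1 hm1, hFp' m2 hm2]; first | omega | (split_ifs <;> omega)
            · rintro ⟨-, -, hg⟩
              rw [hFg m1 hm1, hFg m2 hm2] at hg
              first | omega | (split_ifs at hg <;> omega)
      · intro hmem
        rcases hCmem u hmem with h | ⟨m, hm, hfm⟩
        · have := (val_eq_of_eq h).1; rw [hvp] at this; omega
        · have h1 := (val_eq_of_eq hfm).1
          rw [hFp' m hm] at h1
          first | omega | (split_ifs at h1 <;> omega)
      · intro hmem
        rcases hCmem w hmem with h | ⟨m, hm, hfm⟩
        · have := (val_eq_of_eq h).1; rw [hvp] at this; omega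
        · have h1 := (val_eq_of_eq hfm).1
          rw [hFp' m hm] at h1
          first | omega | (split_ifs at h1 <;> omega)

lemma satB (ht : 4 ≤ t) (hk : t ≤ k) (hn : 3 ≤ n) :
    ∀ u w : Fin k × Fin n, (multipartite k n).Adj u w → ¬ (JG (DB t) (gB t)).Adj u w →
      ¬ ((JG (DB t) (gB t)) ⊔ SimpleGraph.fromEdgeSet {s(u, w)}).CliqueFree t := by
  haveI : NeZero k := ⟨by omega⟩
  haveI : NeZero n := ⟨by omega⟩
  intro u w hG hnJ
  have hGp : u.1 ≠ w.1 := hG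
  have hpv : u.1.val ≠ w.1.val := fun h => hGp (Fin.val_injective h)
  have hne : u ≠ w := fun h => hGp (by rw [h])
  have hedge : ((JG (DB t) (gB t)) ⊔ SimpleGraph.fromEdgeSet {s(u, w)}).Adj u w := by
    refine (sup_adj _ _ _ _).2 (Or.inr ?_)
    rw [fromEdgeSet_adj]
    exact ⟨rfl, hne⟩
  by_cases hu : u ∈ (DB t : Finset (Fin k × Fin n))
  · by_cases hw : w ∈ (DB t : Finset (Fin k × Fin n))
    · -- both dominators, same group
      have hgu : gB t u = gB t w := by
        by_contra hgg
        exact hnJ ⟨hGp, Or.inl hu, fun h => hgg h.2.2⟩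
      have hu' := (DB_mem t u).1 hu
      have hw' := (DB_mem t w).1 hw
      have hupart : u.1.val = gB t u + u.2.val := by simp only [gB]; omega
      have hwpart : w.1.val = gB t w + w.2.val := by simp only [gB]; omega
      have hslot : u.2.val ≠ w.2.val := by
        intro h; apply hpv; rw [hupart, hwpart, hgu, h]
      rcases Nat.lt_or_ge u.2.val w.2.val with hlt | hge
      · exact satB_core t ht hk hn u w hu hw hgu hlt
      · have hlt : w.2.val < u.2.val := by omega
        have h2 := satB_core t ht hk hn w u hw hu hgu.symm hlt
        rw [Sym2.eq_swap] at h2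
        exact h2
    · exact absurd ⟨hGp, Or.inl hu, fun h => hw h.2.1⟩ hnJ
  · by_cases hw : w ∈ (DB t : Finset (Fin k × Fin n))
    · exact absurd ⟨hGp, Or.inr hw, fun h => hu h.1⟩ hnJ
    · -- both outsiders
      obtain ⟨a, b, hab, huab, hwab⟩ :
          ∃ a b, a < b ∧ (u.1.val = a ∨ u.1.val = b) ∧ (w.1.val = a ∨ w.1.val = b) := by
        rcases Nat.lt_or_ge u.1.val w.1.val with h | h
        · exact ⟨u.1.val, w.1.val, h, Or.inl rfl, Or.inr rfl⟩
        · exact ⟨w.1.val, u.1.val, by omega, Or.inr rfl, Or.inl rfl⟩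
      set F : ℕ → Fin k × Fin n :=
        fun m => mk2 (m + (if a ≤ m then 1 else 0) + (if b ≤ m + 1 then 1 else 0))
          ((if a ≤ m then 1 else 0) + (if b ≤ m + 1 then 1 else 0)) with hF
      have hFp : ∀ m < t - 2, (F m).1.val =
          m + (if a ≤ m then 1 else 0) + (if b ≤ m + 1 then 1 else 0) := by
        intro m hm; simp only [hF, mk2_p]; first | omega | (split_ifs <;> omega)
      have hFs : ∀ m < t - 2, (F m).2.val =
          (if a ≤ m then 1 else 0) + (if b ≤ m + 1 then 1 else 0) := by
        intro m hm; simp only [hF, mk2_s]; first | omega | (split_ifs <;> omega)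
      have hFD : ∀ m < t - 2, F m ∈ (DB t : Finset (Fin k × Fin n)) := by
        intro m hm; rw [DB_mem, hFp m hm, hFs m hm]; first | omega | (split_ifs <;> omega)
      have hFg : ∀ m < t - 2, gB t (F m) = m := by
        intro m hm; simp only [gB, hFp m hm, hFs m hm]; first | omega | (split_ifs <;> omega)
      have hFne : ∀ m < t - 2, (F m).1.val ≠ a ∧ (F m).1.val ≠ b := by
        intro m hm; rw [hFp m hm]; first | omega | (split_ifs <;> omega)
      set C : Finset (Fin k × Fin n) := (Finset.range (t - 2)).image F with hC
      have hCmem : ∀ x ∈ C, ∃ m < t - 2, F m = x := by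
        intro x hx
        obtain ⟨m, hm, hfm⟩ := Finset.mem_image.mp hx
        exact ⟨m, Finset.mem_range.mp hm, hfm⟩
      refine builder (t := t) (C := C) (by omega) ?_ hedge ?_ ?_ ?_ ?_ ?_
      · rw [hC, Finset.card_image_of_injOn]
        · rw [Finset.card_range]
        · intro x hx y hy hab2
          rw [Finset.mem_coe, Finset.mem_range] at hx hy
          have h1 := (val_eq_of_eq hab2).1
          rw [hFp x hx, hFp y hy] at h1
          first | omega | (split_ifs at h1 <;> omega)
      · intro x hx
        obtain ⟨m, hm, rfl⟩ := hCmem x hx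
        refine (sup_adj _ _ _ _).2 (Or.inl ?_)
        refine JG_adj' _ _ ?_ (Or.inr (hFD m hm)) (fun h => hu h.1)
        have := hFne m hm; omega
      · intro x hx
        obtain ⟨m, hm, rfl⟩ := hCmem x hx
        refine (sup_adj _ _ _ _).2 (Or.inl ?_)
        refine JG_adj' _ _ ?_ (Or.inr (hFD m hm)) (fun h => hw h.1)
        have := hFne m hm; omega
      · intro x hx y hy hxy
        obtain ⟨m1, hm1, rfl⟩ := hCmem x hx
        obtain ⟨m2, hm2, rfl⟩ := hCmem y hy
        have hm12 : m1 ≠ m2 := fun h => hxy (by rw [h])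
        refine (sup_adj _ _ _ _).2 (Or.inl ?_)
        refine JG_adj' _ _ ?_ (Or.inl (hFD m1 hm1)) ?_
        · rw [hFp m1 hm1, hFp m2 hm2]; first | omega | (split_ifs <;> omega)
        · rintro ⟨-, -, hg⟩
          rw [hFg m1 hm1, hFg m2 hm2] at hg; omega
      · intro hmem
        obtain ⟨m, hm, hfm⟩ := hCmem u hmem
        have h1 := (val_eq_of_eq hfm).1
        have := hFne m hm; omega
      · intro hmem
        obtain ⟨m, hm, hfm⟩ := hCmem w hmem
        have h1 := (val_eq_of_eq hfm).1
        have := hFne m hm; omega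

end CaseB

section Glue
variable (t : ℕ)

lemma glue (ht : 4 ≤ t) (hk : t ≤ k) (hn : 2 ≤ n)
    (D : Finset (Fin k × Fin n)) (g : Fin k × Fin n → ℕ)
    (hcard : D.card * 2 ≤ t * (t - 1))
    (hg : ∀ v ∈ D, g v < t - 2)
    (hsat : ∀ u w : Fin k × Fin n, (multipartite k n).Adj u w → ¬ (JG D g).Adj u w →
      ¬ ((JG D g) ⊔ SimpleGraph.fromEdgeSet {s(u, w)}).CliqueFree t) :
    ∃ (J : SimpleGraph (Fin k × Fin n)) (S : Finset (Fin k × Fin n)),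
      IsSatIn t J (multipartite k n) ∧
      S.card ≤ t * (t - 1) / 2 ∧
      (∀ u w, J.Adj u w → u ∈ S ∨ w ∈ S) ∧
      J.edgeSet.ncard ≤ t * (t - 1) / 2 * (k * n) := by
  have hdiv : D.card ≤ t * (t - 1) / 2 := by
    rw [Nat.le_div_iff_mul_le (by norm_num : (0:ℕ) < 2)]
    exact hcard
  refine ⟨JG D g, D,
    ⟨JG_le D g, JG_cliqueFree D g t (by omega) hg, hsat⟩, hdiv, ?_, ?_⟩
  · intro u w h
    exact h.2.1
  · exact (JG_edges D g).trans (Nat.mul_le_mul_right _ hdiv)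

lemma cardDA (ht : 4 ≤ t) (hn : n = 2) :
    (DA t : Finset (Fin k × Fin n)).card * 2 ≤ t * (t - 1) := by
  have h1 : (DA t : Finset (Fin k × Fin n)).card ≤
      ((Finset.range (t - 1)) ×ˢ (Finset.range 2)).card := by
    refine Finset.card_le_card_of_injOn (fun v => (v.1.val, v.2.val)) ?_ ?_
    · intro v hv
      rw [Finset.mem_coe, DA_mem] at hv
      dsimp only
      rw [Finset.mem_coe, Finset.mem_product, Finset.mem_range, Finset.mem_range]
      have := v.2.isLt
      omega
    · intro v1 _ v2 _ h
      have h1 := congrArg Prod.fst h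
      have h2 := congrArg Prod.snd h
      dsimp only at h1 h2
      exact Prod.ext (Fin.ext h1) (Fin.ext h2)
  rw [Finset.card_product, Finset.card_range, Finset.card_range] at h1
  have h2 : (t - 1) * 2 * 2 = 4 * (t - 1) := by ring
  have h3 : 4 * (t - 1) ≤ t * (t - 1) := Nat.mul_le_mul_right _ (by omega)
  calc (DA t : Finset (Fin k × Fin n)).card * 2 ≤ (t - 1) * 2 * 2 := by omega
    _ = 4 * (t - 1) := h2
    _ ≤ t * (t - 1) := h3

lemma cardDB (ht : 4 ≤ t) :
    (DB t : Finset (Fin k × Fin n)).card * 2 ≤ t * (t - 1) := by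
  have h1 : (DB t : Finset (Fin k × Fin n)).card ≤
      ((Finset.range (t - 2)) ×ˢ (Finset.range 3)).card := by
    refine Finset.card_le_card_of_injOn (fun v => (gB t v, v.2.val)) ?_ ?_
    · intro v hv
      rw [Finset.mem_coe, DB_mem] at hv
      dsimp only
      rw [Finset.mem_coe, Finset.mem_product, Finset.mem_range, Finset.mem_range]
      simp only [gB]
      omega
    · intro v1 hv1 v2 hv2 h
      rw [Finset.mem_coe, DB_mem] at hv1 hv2
      have h1 := congrArg Prod.fst h
      have h2 := congrArg Prod.snd h
      dsimp only at h1 h2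
      simp only [gB] at h1
      refine Prod.ext (Fin.ext ?_) (Fin.ext ?_) <;> omega
  rw [Finset.card_product, Finset.card_range, Finset.card_range] at h1
  rcases Nat.lt_or_ge t 6 with h6 | h6
  · interval_cases t <;> simp_all <;> omega
  · have h2 : (t - 2) * 3 * 2 = 6 * (t - 2) := by ring
    have h3 : 6 * (t - 2) ≤ t * (t - 2) := Nat.mul_le_mul_right _ (by omega)
    have h4 : t * (t - 2) ≤ t * (t - 1) := Nat.mul_le_mul_left _ (by omega)
    calc (DB t : Finset (Fin k × Fin n)).card * 2 ≤ (t - 2) * 3 * 2 := by omega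
      _ = 6 * (t - 2) := h2
      _ ≤ t * (t - 2) := h3
      _ ≤ t * (t - 1) := h4

end Glue
end Stmt17

/-- For `k ≥ t ≥ 4`, `K_k^n` has a `K_t`-saturated subgraph `J` together with a set `S`
of at most `C(t,2) = t(t−1)/2` vertices covering every edge of `J`; consequently
`sat(K_t, K_k^n) ≤ (t(t−1)/2)·kn`. -/
theorem stmt_17 (t k n : ℕ) (ht : 4 ≤ t) (hk : t ≤ k) (hn : 2 ≤ n) :
    ∃ (J : SimpleGraph (Fin k × Fin n)) (S : Finset (Fin k × Fin n)),
      IsSatIn t J (multipartite k n) ∧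
      S.card ≤ t * (t - 1) / 2 ∧
      (∀ u w, J.Adj u w → u ∈ S ∨ w ∈ S) ∧
      J.edgeSet.ncard ≤ t * (t - 1) / 2 * (k * n) := by
  rcases Nat.lt_or_ge n 3 with h3 | h3
  · have hn2 : n = 2 := by omega
    exact Stmt17.glue t ht hk hn (Stmt17.DA t) (Stmt17.gA t)
      (Stmt17.cardDA t ht hn2) (Stmt17.gA_lt t ht) (Stmt17.satA t ht hk hn)
  · exact Stmt17.glue t ht hk hn (Stmt17.DB t) (Stmt17.gB t)
      (Stmt17.cardDB t ht) (Stmt17.gB_lt t ht) (Stmt17.satB t ht hk h3)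
end
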